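/- arXiv:2201.03150 — 3 statements merged into one kernel-verified Lean document; each statement's English description precedes it below -/
import Mathlib

section
/- Let π : (X,G) → (Y,G) be a factor map between G-systems and U, V finite open covers of X. Then D̄(G, U ∨ V | π) = max{D̄(G,U|π), D̄(G,V|π)}, where U ∨ V = {U ∩ V : U ∈ U, V ∈ V}. -/
open Filter Topology Pointwise
open scoped ENNReal

/-- A Følner sequence for a group `G`. -/
def IsFolnerSeq (G : Type*) [Group G] (F : ℕ → Finset G) : Prop :=
  (∀ n, (F n).Nonempty) ∧
    ∀ (K : Finset G) (δ : ℝ), 0 < δ →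
      ∀ᶠ n in atTop,
        ((symmDiff ((K : Set G) * ((F n : Set G))) ((F n : Set G))).ncard : ℝ) <
          δ * ((F n).card : ℝ)

/-- Amenability of a (countable discrete) group via almost invariant finite sets. -/
def IsAmenableGrp (G : Type*) [Group G] : Prop :=
  ∀ K : Finset G, K.Nonempty → ∀ δ : ℝ, 0 < δ →
    ∃ F : Finset G, F.Nonempty ∧
      ((symmDiff ((K : Set G) * (F : Set G)) (F : Set G)).ncard : ℝ) < δ * (F.card : ℝ)

/-- The finite set `A ∩ S`. -/
noncomputable def interF {G : Type*} (A : Finset G) (S : Set G) : Finset G :=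
  @Finset.filter G (fun g => g ∈ S) (Classical.decPred _) A

/-- `S` belongs to `𝓘(G)` : `|S ∩ F n| → ∞`. -/
def InI {G : Type*} (F : ℕ → Finset G) (S : Set G) : Prop :=
  Tendsto (fun n => (interF (F n) S).card) atTop atTop

/-- `D̄(S, α) = limsup_n |S ∩ F n| / |F n|^α`. -/
noncomputable def DbarAt {G : Type*} (F : ℕ → Finset G) (S : Set G) (α : ℝ) : ℝ≥0∞ :=
  atTop.limsup fun n =>
    ((interF (F n) S).card : ℝ≥0∞) / ENNReal.ofReal (((F n).card : ℝ) ^ α)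

/-- `D̲(S, α) = liminf_n |S ∩ F n| / |F n|^α`. -/
noncomputable def DlowAt {G : Type*} (F : ℕ → Finset G) (S : Set G) (α : ℝ) : ℝ≥0∞ :=
  atTop.liminf fun n =>
    ((interF (F n) S).card : ℝ≥0∞) / ENNReal.ofReal (((F n).card : ℝ) ^ α)

/-- The upper dimension `D̄(S)` of a subset `S ⊆ G`. -/
noncomputable def upperDim {G : Type*} (F : ℕ → Finset G) (S : Set G) : ℝ :=
  sInf {α : ℝ | 0 ≤ α ∧ DbarAt F S α = 0}

/-- The lower dimension `D̲(S)` of a subset `S ⊆ G`. -/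
noncomputable def lowerDim {G : Type*} (F : ℕ → Finset G) (S : Set G) : ℝ :=
  sInf {α : ℝ | 0 ≤ α ∧ DlowAt F S α = 0}

/-- A finite open cover of `X`. -/
def IsOpenCover {X : Type*} [TopologicalSpace X] (𝒰 : Set (Set X)) : Prop :=
  𝒰.Finite ∧ (∀ U ∈ 𝒰, IsOpen U) ∧ ⋃₀ 𝒰 = Set.univ

/-- Minimal number of members of `𝒰` needed to cover `E`. -/
noncomputable def coverNum {X : Type*} (𝒰 : Set (Set X)) (E : Set X) : ℕ :=
  sInf {k | ∃ t : Finset (Set X), ↑t ⊆ 𝒰 ∧ t.card = k ∧ E ⊆ ⋃₀ (t : Set (Set X))}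

/-- `N(𝒰 | π) = sup_y` of the covering number of the fiber `π ⁻¹ y`. -/
noncomputable def NRel {X Y : Type*} (𝒰 : Set (Set X)) (π : X → Y) : ℕ :=
  ⨆ y : Y, coverNum 𝒰 (π ⁻¹' {y})

/-- A factor map between `G`-systems. -/
def IsFactorMap (G : Type*) {X Y : Type*} [Group G] [TopologicalSpace X] [TopologicalSpace Y]
    [MulAction G X] [MulAction G Y] (π : X → Y) : Prop :=
  Continuous π ∧ Function.Surjective π ∧ ∀ (g : G) (x : X), π (g • x) = g • π x

/-- The join `⋁_{g ∈ B} g⁻¹ 𝒰`. -/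
def dynJoin {G X : Type*} [Group G] [MulAction G X] (B : Finset G) (𝒰 : Set (Set X)) :
    Set (Set X) :=
  {W | ∃ f : G → Set X, (∀ g ∈ B, f g ∈ 𝒰) ∧ W = ⋂ g ∈ B, (fun x => g • x) ⁻¹' f g}

/-- `h̄(G, 𝒰, α | π)`. -/
noncomputable def hRelU {G X Y : Type*} [Group G] [MulAction G X]
    (F : ℕ → Finset G) (𝒰 : Set (Set X)) (π : X → Y) (α : ℝ) : ℝ≥0∞ :=
  atTop.limsup fun n =>
    ENNReal.ofReal (Real.log (NRel (dynJoin (F n) 𝒰) π)) /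
      ENNReal.ofReal (((F n).card : ℝ) ^ α)

/-- `h̲(G, 𝒰, α | π)`. -/
noncomputable def hRelL {G X Y : Type*} [Group G] [MulAction G X]
    (F : ℕ → Finset G) (𝒰 : Set (Set X)) (π : X → Y) (α : ℝ) : ℝ≥0∞ :=
  atTop.liminf fun n =>
    ENNReal.ofReal (Real.log (NRel (dynJoin (F n) 𝒰) π)) /
      ENNReal.ofReal (((F n).card : ℝ) ^ α)

/-- The relative upper entropy dimension `D̄(G, 𝒰 | π)` of a cover. -/
noncomputable def DU {G X Y : Type*} [Group G] [MulAction G X]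
    (F : ℕ → Finset G) (𝒰 : Set (Set X)) (π : X → Y) : ℝ :=
  sInf {α : ℝ | 0 ≤ α ∧ hRelU F 𝒰 π α = 0}

/-- The relative lower entropy dimension `D̲(G, 𝒰 | π)` of a cover. -/
noncomputable def DL {G X Y : Type*} [Group G] [MulAction G X]
    (F : ℕ → Finset G) (𝒰 : Set (Set X)) (π : X → Y) : ℝ :=
  sInf {α : ℝ | 0 ≤ α ∧ hRelL F 𝒰 π α = 0}

/-- The relative upper entropy dimension `D̄(X, G | π)` of the system. -/
noncomputable def DUSys {G X Y : Type*} [Group G] [TopologicalSpace X] [MulAction G X]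
    (F : ℕ → Finset G) (π : X → Y) : ℝ :=
  sSup {d : ℝ | ∃ 𝒰 : Set (Set X), IsOpenCover 𝒰 ∧ d = DU F 𝒰 π}

/-- The relative lower entropy dimension `D̲(X, G | π)` of the system. -/
noncomputable def DLSys {G X Y : Type*} [Group G] [TopologicalSpace X] [MulAction G X]
    (F : ℕ → Finset G) (π : X → Y) : ℝ :=
  sSup {d : ℝ | ∃ 𝒰 : Set (Set X), IsOpenCover 𝒰 ∧ d = DL F 𝒰 π}

/-- `(1 / |F n ∩ S|) log N(⋁_{g ∈ F n ∩ S} g⁻¹ 𝒰 | π)`. -/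
noncomputable def entAlong {G X Y : Type*} [Group G] [MulAction G X]
    (F : ℕ → Finset G) (S : Set G) (𝒰 : Set (Set X)) (π : X → Y) : ℕ → ℝ≥0∞ :=
  fun n =>
    ENNReal.ofReal (Real.log (NRel (dynJoin (interF (F n) S) 𝒰) π)) /
      ((interF (F n) S).card : ℝ≥0∞)

/-- `S` is a relative entropy generating set of `𝒰` relative to `π`. -/
def IsEntGen {G X Y : Type*} [Group G] [MulAction G X]
    (F : ℕ → Finset G) (S : Set G) (𝒰 : Set (Set X)) (π : X → Y) : Prop :=
  InI F S ∧ 0 < atTop.liminf (entAlong F S 𝒰 π)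

/-- `S ∈ 𝒫(G, 𝒰 | π)` : positive relative upper entropy along `S`. -/
def InP {G X Y : Type*} [Group G] [MulAction G X]
    (F : ℕ → Finset G) (S : Set G) (𝒰 : Set (Set X)) (π : X → Y) : Prop :=
  InI F S ∧ 0 < atTop.limsup (entAlong F S 𝒰 π)

/-- `D̄_e(G, 𝒰 | π)`. -/
noncomputable def DeU {G X Y : Type*} [Group G] [MulAction G X]
    (F : ℕ → Finset G) (𝒰 : Set (Set X)) (π : X → Y) : ℝ :=
  sSup {d : ℝ | ∃ S : Set G, IsEntGen F S 𝒰 π ∧ d = upperDim F S}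

/-- `D̲_e(G, 𝒰 | π)`. -/
noncomputable def DeL {G X Y : Type*} [Group G] [MulAction G X]
    (F : ℕ → Finset G) (𝒰 : Set (Set X)) (π : X → Y) : ℝ :=
  sSup {d : ℝ | ∃ S : Set G, IsEntGen F S 𝒰 π ∧ d = lowerDim F S}

/-- `D̄_p(G, 𝒰 | π)`. -/
noncomputable def DpU {G X Y : Type*} [Group G] [MulAction G X]
    (F : ℕ → Finset G) (𝒰 : Set (Set X)) (π : X → Y) : ℝ :=
  sSup {d : ℝ | ∃ S : Set G, InP F S 𝒰 π ∧ d = upperDim F S}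

/-- `D̲_p(G, 𝒰 | π)`. -/
noncomputable def DpL {G X Y : Type*} [Group G] [MulAction G X]
    (F : ℕ → Finset G) (𝒰 : Set (Set X)) (π : X → Y) : ℝ :=
  sSup {d : ℝ | ∃ S : Set G, InP F S 𝒰 π ∧ d = lowerDim F S}

/-- `D̄_e(X, G | π)`. -/
noncomputable def DeUSys {G X Y : Type*} [Group G] [TopologicalSpace X] [MulAction G X]
    (F : ℕ → Finset G) (π : X → Y) : ℝ :=
  sSup {d : ℝ | ∃ 𝒰 : Set (Set X), IsOpenCover 𝒰 ∧ d = DeU F 𝒰 π}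

/-- `D̲_p(X, G | π)`. -/
noncomputable def DpLSys {G X Y : Type*} [Group G] [TopologicalSpace X] [MulAction G X]
    (F : ℕ → Finset G) (π : X → Y) : ℝ :=
  sSup {d : ℝ | ∃ 𝒰 : Set (Set X), IsOpenCover 𝒰 ∧ d = DpL F 𝒰 π}

/-- The cover `{X ∖ cl B(x i, 1/k) : i}` associated with a tuple. -/
def ballCover {X : Type*} [MetricSpace X] {n : ℕ} (x : Fin n → X) (k : ℕ) : Set (Set X) :=
  {V | ∃ i : Fin n, V = (Metric.closedBall (x i) (1 / (k : ℝ)))ᶜ}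

/-- The relative entropy dimension `D̄(x₁, …, x_n | π)` of a tuple. -/
noncomputable def tupleDim {G X Y : Type*} [Group G] [MetricSpace X] [MulAction G X] {n : ℕ}
    (F : ℕ → Finset G) (x : Fin n → X) (π : X → Y) : ℝ :=
  limUnder atTop fun k : ℕ => DU F (ballCover x k) π

/-- The tuple lies on the diagonal. -/
def IsDiag {X : Type*} {n : ℕ} (x : Fin n → X) : Prop := ∀ i j, x i = x j

/-- The `n`-th relative dimension set `𝒟_n(X, G | π)`. -/
noncomputable def dimSet {G X Z : Type*} [Group G] [MetricSpace X] [MulAction G X]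
    (F : ℕ → Finset G) (π : X → Z) (n : ℕ) : Set ℝ :=
  {α : ℝ | 0 ≤ α ∧ ∃ x : Fin n → X, ¬ IsDiag x ∧ tupleDim F x π = α}

/-- The translated cover `g𝒰`. -/
def smulCover {G X : Type*} [SMul G X] (g : G) (𝒰 : Set (Set X)) : Set (Set X) :=
  (fun U => (fun x => g • x) '' U) '' 𝒰

/-- The join `𝒰 ∨ 𝒱` of two covers. -/
def covJoin {X : Type*} (𝒰 𝒱 : Set (Set X)) : Set (Set X) :=
  {W | ∃ U ∈ 𝒰, ∃ V ∈ 𝒱, W = U ∩ V}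

/-- A standard cover: two non-dense open sets covering `X`. -/
def IsStandardCover {X : Type*} [TopologicalSpace X] (𝒲 : Set (Set X)) : Prop :=
  ∃ U V : Set X, 𝒲 = {U, V} ∧ IsOpen U ∧ IsOpen V ∧ U ∪ V = Set.univ ∧
    ¬ Dense U ∧ ¬ Dense V



section Stmt5Aux

open Set Filter

variable {G X Y : Type*} [Group G] [MulAction G X]

private lemma lognat_nonneg (n : ℕ) : 0 ≤ Real.log n := Real.log_natCast_nonneg n

private lemma lognat_mono {a b : ℕ} (h : a ≤ b) : Real.log a ≤ Real.log b := by
  rcases Nat.eq_zero_or_pos a with rfl | ha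
  · simpa using lognat_nonneg b
  · exact Real.log_le_log (by exact_mod_cast ha) (by exact_mod_cast h)

private lemma dynJoin_covers {𝒞 : Set (Set X)} (hc : ⋃₀ 𝒞 = Set.univ)
    (B : Finset G) (x : X) : ∃ W ∈ dynJoin B 𝒞, x ∈ W := by
  have h : ∀ g : G, ∃ U, U ∈ 𝒞 ∧ g • x ∈ U := by
    intro g
    have : g • x ∈ ⋃₀ 𝒞 := by rw [hc]; trivial
    simpa [Set.mem_sUnion] using this
  choose f hf1 hf2 using h
  exact ⟨⋂ g ∈ B, (fun y => g • y) ⁻¹' f g, ⟨f, fun g _ => hf1 g, rfl⟩,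
    Set.mem_iInter₂.2 fun g _ => hf2 g⟩

private lemma dynJoin_subset_finset {𝒞 : Set (Set X)} (h𝒞 : 𝒞.Finite) (B : Finset G) :
    ∃ T : Finset (Set X), dynJoin B 𝒞 ⊆ ↑T ∧ T.card ≤ h𝒞.toFinset.card ^ B.card := by
  classical
  induction B using Finset.induction with
  | empty =>
    refine ⟨{Set.univ}, ?_, by simp⟩
    rintro W ⟨f, hf, rfl⟩
    simp
  | @insert a B ha ih =>
    obtain ⟨T, hT, hTc⟩ := ih
    refine ⟨(h𝒞.toFinset ×ˢ T).image fun p => (fun y => a • y) ⁻¹' p.1 ∩ p.2, ?_, ?_⟩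
    · rintro W ⟨f, hf, rfl⟩
      rw [Finset.set_biInter_insert]
      refine Finset.mem_coe.2 (Finset.mem_image.2
        ⟨(f a, ⋂ g ∈ B, (fun y => g • y) ⁻¹' f g), ?_, rfl⟩)
      refine Finset.mem_product.2 ⟨h𝒞.mem_toFinset.2 (hf a (Finset.mem_insert_self a B)), ?_⟩
      exact hT ⟨f, fun g hg => hf g (Finset.mem_insert_of_mem hg), rfl⟩
    · calc ((h𝒞.toFinset ×ˢ T).image fun p => (fun y => a • y) ⁻¹' p.1 ∩ p.2).card
          ≤ (h𝒞.toFinset ×ˢ T).card := Finset.card_image_le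
        _ = h𝒞.toFinset.card * T.card := Finset.card_product _ _
        _ ≤ h𝒞.toFinset.card * h𝒞.toFinset.card ^ B.card := Nat.mul_le_mul_left _ hTc
        _ = h𝒞.toFinset.card ^ (insert a B).card := by
            rw [Finset.card_insert_of_notMem ha, pow_succ, mul_comm]

private lemma coverNum_le_card {𝒞 : Set (Set X)} {E : Set X} {t : Finset (Set X)}
    (ht : ↑t ⊆ 𝒞) (hcov : E ⊆ ⋃₀ ↑t) : coverNum 𝒞 E ≤ t.card :=
  Nat.sInf_le ⟨t, ht, rfl, hcov⟩

private lemma exists_coverFinset {𝒞 : Set (Set X)} (h𝒞 : 𝒞.Finite) (hc : ⋃₀ 𝒞 = Set.univ)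
    (B : Finset G) (E : Set X) :
    ∃ t : Finset (Set X), ↑t ⊆ dynJoin B 𝒞 ∧ E ⊆ ⋃₀ ↑t ∧
      t.card ≤ h𝒞.toFinset.card ^ B.card := by
  classical
  obtain ⟨T, hT, hTc⟩ := dynJoin_subset_finset h𝒞 B
  refine ⟨T.filter (· ∈ dynJoin B 𝒞), ?_, ?_, (Finset.card_filter_le _ _).trans hTc⟩
  · intro W hW
    exact (Finset.mem_filter.1 (Finset.mem_coe.1 hW)).2
  · intro x _
    obtain ⟨W, hW1, hW2⟩ := dynJoin_covers hc B x
    exact ⟨W, Finset.mem_coe.2 (Finset.mem_filter.2 ⟨hT hW1, hW1⟩), hW2⟩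

private lemma coverNum_le_of_refine {𝒞 𝒟 : Set (Set X)} {E : Set X}
    (href : ∀ W ∈ 𝒟, ∃ W' ∈ 𝒞, W ⊆ W')
    (hne : ∃ t : Finset (Set X), ↑t ⊆ 𝒟 ∧ E ⊆ ⋃₀ ↑t) :
    coverNum 𝒞 E ≤ coverNum 𝒟 E := by
  classical
  have hsetne : {k | ∃ t : Finset (Set X), ↑t ⊆ 𝒟 ∧ t.card = k ∧ E ⊆ ⋃₀ ↑t}.Nonempty := by
    obtain ⟨t, h1, h2⟩ := hne; exact ⟨t.card, t, h1, rfl, h2⟩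
  obtain ⟨t, ht𝒟, htc, htcov⟩ := Nat.sInf_mem hsetne
  have hch : ∀ W : Set X, ∃ W', W ∈ 𝒟 → (W' ∈ 𝒞 ∧ W ⊆ W') := by
    intro W
    by_cases h : W ∈ 𝒟
    · obtain ⟨W', hW'1, hW'2⟩ := href W h
      exact ⟨W', fun _ => ⟨hW'1, hW'2⟩⟩
    · exact ⟨∅, fun h' => absurd h' h⟩
  choose ψ hψ using hch
  have h1 : ↑(t.image ψ) ⊆ 𝒞 := by
    intro W' hW'
    obtain ⟨W, hW, rfl⟩ := Finset.mem_image.1 (Finset.mem_coe.1 hW')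
    exact (hψ W (ht𝒟 (Finset.mem_coe.2 hW))).1
  have h2 : E ⊆ ⋃₀ ↑(t.image ψ) := by
    intro x hx
    obtain ⟨W, hWt, hxW⟩ := htcov hx
    exact ⟨ψ W, Finset.mem_coe.2 (Finset.mem_image.2 ⟨W, Finset.mem_coe.1 hWt, rfl⟩),
      (hψ W (ht𝒟 hWt)).2 hxW⟩
  calc coverNum 𝒞 E ≤ (t.image ψ).card := coverNum_le_card h1 h2
    _ ≤ t.card := Finset.card_image_le
    _ = coverNum 𝒟 E := htc

private lemma coverNum_le_mul {𝒞₁ 𝒞₂ 𝒞₃ : Set (Set X)} {E : Set X}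
    (h3 : ∀ W ∈ 𝒞₁, ∀ W' ∈ 𝒞₂, W ∩ W' ∈ 𝒞₃)
    (h1 : ∃ t : Finset (Set X), ↑t ⊆ 𝒞₁ ∧ E ⊆ ⋃₀ ↑t)
    (h2 : ∃ t : Finset (Set X), ↑t ⊆ 𝒞₂ ∧ E ⊆ ⋃₀ ↑t) :
    coverNum 𝒞₃ E ≤ coverNum 𝒞₁ E * coverNum 𝒞₂ E := by
  classical
  have hne1 : {k | ∃ t : Finset (Set X), ↑t ⊆ 𝒞₁ ∧ t.card = k ∧ E ⊆ ⋃₀ ↑t}.Nonempty := by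
    obtain ⟨t, ha, hb⟩ := h1; exact ⟨t.card, t, ha, rfl, hb⟩
  have hne2 : {k | ∃ t : Finset (Set X), ↑t ⊆ 𝒞₂ ∧ t.card = k ∧ E ⊆ ⋃₀ ↑t}.Nonempty := by
    obtain ⟨t, ha, hb⟩ := h2; exact ⟨t.card, t, ha, rfl, hb⟩
  obtain ⟨t, ht1, htc, htcov⟩ := Nat.sInf_mem hne1
  obtain ⟨s, hs1, hsc, hscov⟩ := Nat.sInf_mem hne2
  have hsub : ↑((t ×ˢ s).image fun p => p.1 ∩ p.2) ⊆ 𝒞₃ := by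
    intro W hW
    obtain ⟨⟨W1, W2⟩, hmem, rfl⟩ := Finset.mem_image.1 (Finset.mem_coe.1 hW)
    obtain ⟨hm1, hm2⟩ := Finset.mem_product.1 hmem
    exact h3 W1 (ht1 (Finset.mem_coe.2 hm1)) W2 (hs1 (Finset.mem_coe.2 hm2))
  have hcov : E ⊆ ⋃₀ ↑((t ×ˢ s).image fun p => p.1 ∩ p.2) := by
    intro x hx
    obtain ⟨W1, hW1, hx1⟩ := htcov hx
    obtain ⟨W2, hW2, hx2⟩ := hscov hx
    exact ⟨W1 ∩ W2, Finset.mem_coe.2 (Finset.mem_image.2 ⟨(W1, W2),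
      Finset.mem_product.2 ⟨Finset.mem_coe.1 hW1, Finset.mem_coe.1 hW2⟩, rfl⟩), hx1, hx2⟩
  calc coverNum 𝒞₃ E ≤ ((t ×ˢ s).image fun p => p.1 ∩ p.2).card := coverNum_le_card hsub hcov
    _ ≤ (t ×ˢ s).card := Finset.card_image_le
    _ = t.card * s.card := Finset.card_product _ _
    _ = coverNum 𝒞₁ E * coverNum 𝒞₂ E := by rw [htc, hsc]; rfl

private lemma dynJoin_refines_left (B : Finset G) (𝒰 𝒱 : Set (Set X)) :
    ∀ W ∈ dynJoin B (covJoin 𝒰 𝒱), ∃ W' ∈ dynJoin B 𝒰, W ⊆ W' := by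
  rintro W ⟨f, hf, rfl⟩
  have h : ∀ g : G, ∃ u, g ∈ B → (u ∈ 𝒰 ∧ f g ⊆ u) := by
    intro g
    by_cases hg : g ∈ B
    · obtain ⟨u, hu, v, hv, huv⟩ := hf g hg
      exact ⟨u, fun _ => ⟨hu, huv ▸ Set.inter_subset_left⟩⟩
    · exact ⟨∅, fun h' => absurd h' hg⟩
  choose u hu using h
  refine ⟨⋂ g ∈ B, (fun y => g • y) ⁻¹' u g, ⟨u, fun g hg => (hu g hg).1, rfl⟩, ?_⟩
  exact Set.iInter₂_mono fun g hg => Set.preimage_mono (hu g hg).2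

private lemma dynJoin_refines_right (B : Finset G) (𝒰 𝒱 : Set (Set X)) :
    ∀ W ∈ dynJoin B (covJoin 𝒰 𝒱), ∃ W' ∈ dynJoin B 𝒱, W ⊆ W' := by
  rintro W ⟨f, hf, rfl⟩
  have h : ∀ g : G, ∃ v, g ∈ B → (v ∈ 𝒱 ∧ f g ⊆ v) := by
    intro g
    by_cases hg : g ∈ B
    · obtain ⟨u, hu, v, hv, huv⟩ := hf g hg
      exact ⟨v, fun _ => ⟨hv, huv ▸ Set.inter_subset_right⟩⟩
    · exact ⟨∅, fun h' => absurd h' hg⟩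
  choose v hv using h
  refine ⟨⋂ g ∈ B, (fun y => g • y) ⁻¹' v g, ⟨v, fun g hg => (hv g hg).1, rfl⟩, ?_⟩
  exact Set.iInter₂_mono fun g hg => Set.preimage_mono (hv g hg).2

private lemma dynJoin_inter_mem (B : Finset G) (𝒰 𝒱 : Set (Set X)) :
    ∀ W ∈ dynJoin B 𝒰, ∀ W' ∈ dynJoin B 𝒱, W ∩ W' ∈ dynJoin B (covJoin 𝒰 𝒱) := by
  rintro W ⟨f, hf, rfl⟩ W' ⟨f', hf', rfl⟩
  refine ⟨fun g => f g ∩ f' g, fun g hg => ⟨f g, hf g hg, f' g, hf' g hg, rfl⟩, ?_⟩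
  ext x
  simp only [Set.mem_inter_iff, Set.mem_iInter, Set.mem_preimage]
  exact ⟨fun h g hg => ⟨h.1 g hg, h.2 g hg⟩,
    fun h => ⟨fun g hg => (h g hg).1, fun g hg => (h g hg).2⟩⟩

private lemma covJoin_finite {𝒰 𝒱 : Set (Set X)} (h𝒰 : 𝒰.Finite) (h𝒱 : 𝒱.Finite) :
    (covJoin 𝒰 𝒱).Finite := by
  have : covJoin 𝒰 𝒱 = Set.image2 (fun U V => U ∩ V) 𝒰 𝒱 := by
    ext W
    simp only [covJoin, Set.mem_image2, Set.mem_setOf_eq]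
    constructor
    · rintro ⟨U, hU, V, hV, rfl⟩; exact ⟨U, hU, V, hV, rfl⟩
    · rintro ⟨U, hU, V, hV, rfl⟩; exact ⟨U, hU, V, hV, rfl⟩
  rw [this]
  exact h𝒰.image2 _ h𝒱

private lemma covJoin_covers {𝒰 𝒱 : Set (Set X)} (h𝒰 : ⋃₀ 𝒰 = Set.univ)
    (h𝒱 : ⋃₀ 𝒱 = Set.univ) : ⋃₀ covJoin 𝒰 𝒱 = Set.univ := by
  ext x
  simp only [Set.mem_sUnion, Set.mem_univ, iff_true]
  have hx1 : x ∈ ⋃₀ 𝒰 := by rw [h𝒰]; trivial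
  have hx2 : x ∈ ⋃₀ 𝒱 := by rw [h𝒱]; trivial
  obtain ⟨U, hU, hxU⟩ := hx1
  obtain ⟨V, hV, hxV⟩ := hx2
  exact ⟨U ∩ V, ⟨U, hU, V, hV, rfl⟩, hxU, hxV⟩

private lemma bddAbove_coverNum {𝒞 : Set (Set X)} (h𝒞 : 𝒞.Finite) (hc : ⋃₀ 𝒞 = Set.univ)
    (B : Finset G) (π : X → Y) :
    BddAbove (Set.range fun y : Y => coverNum (dynJoin B 𝒞) (π ⁻¹' {y})) := by
  refine ⟨h𝒞.toFinset.card ^ B.card, ?_⟩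
  rintro _ ⟨y, rfl⟩
  obtain ⟨t, h1, h2, h3⟩ := exists_coverFinset h𝒞 hc B (π ⁻¹' {y})
  exact (coverNum_le_card h1 h2).trans h3

private lemma NRel_dynJoin_le_pow {𝒞 : Set (Set X)} (h𝒞 : 𝒞.Finite) (hc : ⋃₀ 𝒞 = Set.univ)
    (B : Finset G) (π : X → Y) :
    NRel (dynJoin B 𝒞) π ≤ h𝒞.toFinset.card ^ B.card := by
  refine ciSup_le' fun y => ?_
  obtain ⟨t, h1, h2, h3⟩ := exists_coverFinset h𝒞 hc B (π ⁻¹' {y})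
  exact (coverNum_le_card h1 h2).trans h3


private lemma limsup_zero_tendsto {u : ℕ → ℝ≥0∞} (h : atTop.limsup u = 0) :
    Tendsto u atTop (𝓝 0) := by
  refine tendsto_of_liminf_eq_limsup ?_ h
  exact le_antisymm (h ▸ liminf_le_limsup) (zero_le)

private lemma limsup_eq_zero_of_le_add {u v w : ℕ → ℝ≥0∞}
    (h : ∀ n, w n ≤ u n + v n) (hu : atTop.limsup u = 0) (hv : atTop.limsup v = 0) :
    atTop.limsup w = 0 := by
  have hu' := limsup_zero_tendsto hu
  have hv' := limsup_zero_tendsto hv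
  have hsum : Tendsto (fun n => u n + v n) atTop (𝓝 0) := by
    simpa using hu'.add hv'
  have hw : Tendsto w atTop (𝓝 0) :=
    tendsto_of_tendsto_of_tendsto_of_le_of_le tendsto_const_nhds hsum
      (fun n => zero_le) h
  exact hw.limsup_eq

private lemma hRelU_le_of_NRel_le {F : ℕ → Finset G} {𝒞 𝒟 : Set (Set X)} {π : X → Y} {α : ℝ}
    (h : ∀ n, NRel (dynJoin (F n) 𝒞) π ≤ NRel (dynJoin (F n) 𝒟) π) :
    hRelU F 𝒞 π α ≤ hRelU F 𝒟 π α :=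
  limsup_le_limsup (Eventually.of_forall fun n =>
    ENNReal.div_le_div_right (ENNReal.ofReal_le_ofReal (lognat_mono (h n))) _)

private lemma hRelU_anti {F : ℕ → Finset G} (hne : ∀ n, (F n).Nonempty)
    (𝒞 : Set (Set X)) (π : X → Y) {α β : ℝ} (hαβ : α ≤ β) :
    hRelU F 𝒞 π β ≤ hRelU F 𝒞 π α := by
  refine limsup_le_limsup (Eventually.of_forall fun n => ?_)
  refine ENNReal.div_le_div_left (ENNReal.ofReal_le_ofReal ?_) _
  have h1 : (1:ℝ) ≤ ((F n).card : ℝ) := by exact_mod_cast Finset.card_pos.2 (hne n)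
  exact Real.rpow_le_rpow_of_exponent_le h1 hαβ

private lemma hRelU_two_eq_zero {F : ℕ → Finset G} (hne : ∀ n, (F n).Nonempty)
    (hcard : Tendsto (fun n => (F n).card) atTop atTop)
    {𝒞 : Set (Set X)} (h𝒞 : 𝒞.Finite) (hc : ⋃₀ 𝒞 = Set.univ) (π : X → Y) :
    hRelU F 𝒞 π (2:ℝ) = 0 := by
  set M := h𝒞.toFinset.card with hM
  have hb : ∀ n, ENNReal.ofReal (Real.log (NRel (dynJoin (F n) 𝒞) π)) /
      ENNReal.ofReal (((F n).card : ℝ) ^ (2:ℝ)) ≤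
      ENNReal.ofReal (Real.log M) / ENNReal.ofReal ((F n).card : ℝ) := by
    intro n
    have hc1 : (1:ℝ) ≤ ((F n).card : ℝ) := by exact_mod_cast Finset.card_pos.2 (hne n)
    have hc0 : (0:ℝ) < ((F n).card : ℝ) := zero_lt_one.trans_le hc1
    have hlog : Real.log (NRel (dynJoin (F n) 𝒞) π) ≤ ((F n).card : ℝ) * Real.log M := by
      refine (lognat_mono (NRel_dynJoin_le_pow h𝒞 hc (F n) π)).trans ?_
      rw [Nat.cast_pow, Real.log_pow]
    have hrpow : (((F n).card : ℝ)) ^ (2:ℝ) = ((F n).card : ℝ) * ((F n).card : ℝ) := by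
      rw [show (2:ℝ) = ((2:ℕ):ℝ) by norm_num, Real.rpow_natCast, sq]
    calc ENNReal.ofReal (Real.log (NRel (dynJoin (F n) 𝒞) π)) /
          ENNReal.ofReal (((F n).card : ℝ) ^ (2:ℝ))
        ≤ ENNReal.ofReal (((F n).card : ℝ) * Real.log M) /
          ENNReal.ofReal (((F n).card : ℝ) * ((F n).card : ℝ)) := by
          rw [hrpow]
          exact ENNReal.div_le_div_right (ENNReal.ofReal_le_ofReal hlog) _
      _ = (ENNReal.ofReal ((F n).card : ℝ) * ENNReal.ofReal (Real.log M)) /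
            (ENNReal.ofReal ((F n).card : ℝ) * ENNReal.ofReal ((F n).card : ℝ)) := by
          rw [ENNReal.ofReal_mul hc0.le, ENNReal.ofReal_mul hc0.le]
      _ = ENNReal.ofReal (Real.log M) / ENNReal.ofReal ((F n).card : ℝ) :=
          ENNReal.mul_div_mul_left _ _ (ENNReal.ofReal_pos.2 hc0).ne' ENNReal.ofReal_ne_top
  have htop : Tendsto (fun n => ENNReal.ofReal ((F n).card : ℝ)) atTop (𝓝 ⊤) :=
    ENNReal.tendsto_ofReal_atTop.comp (tendsto_natCast_atTop_atTop.comp hcard)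
  have hdiv : Tendsto (fun n => ENNReal.ofReal (Real.log M) /
      ENNReal.ofReal ((F n).card : ℝ)) atTop (𝓝 0) := by
    have h := ENNReal.Tendsto.const_div (a := ENNReal.ofReal (Real.log (M:ℕ))) htop
      (Or.inr ENNReal.ofReal_ne_top)
    simpa [ENNReal.div_top] using h
  have hT : Tendsto (fun n => ENNReal.ofReal (Real.log (NRel (dynJoin (F n) 𝒞) π)) /
      ENNReal.ofReal (((F n).card : ℝ) ^ (2:ℝ))) atTop (𝓝 0) :=
    tendsto_of_tendsto_of_tendsto_of_le_of_le tendsto_const_nhds hdiv (fun n => zero_le) hb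
  exact hT.limsup_eq

private lemma DU_eq_zero_of_eventually_const {F : ℕ → Finset G} {N : ℕ}
    (hconst : ∀ n, N ≤ n → F n = F N) (hne : (F N).Nonempty)
    (𝒞 : Set (Set X)) (π : X → Y) : DU F 𝒞 π = 0 := by
  set L := ENNReal.ofReal (Real.log (NRel (dynJoin (F N) 𝒞) π)) with hL
  have hval : ∀ α : ℝ, hRelU F 𝒞 π α = L / ENNReal.ofReal (((F N).card : ℝ) ^ α) := by
    intro α
    have hev : ∀ᶠ n in atTop, (ENNReal.ofReal (Real.log (NRel (dynJoin (F n) 𝒞) π)) /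
        ENNReal.ofReal (((F n).card : ℝ) ^ α)) =
        L / ENNReal.ofReal (((F N).card : ℝ) ^ α) := by
      filter_upwards [eventually_ge_atTop N] with n hn
      rw [hconst n hn, hL]
    exact (limsup_congr hev).trans (limsup_const _)
  have hzero : ∀ α : ℝ, (L / ENNReal.ofReal (((F N).card : ℝ) ^ α) = 0) ↔ L = 0 := by
    intro α
    rw [ENNReal.div_eq_zero_iff]
    simp [ENNReal.ofReal_ne_top]
  unfold DU
  by_cases hL0 : L = 0
  · have hset : {α : ℝ | 0 ≤ α ∧ hRelU F 𝒞 π α = 0} = Set.Ici 0 := by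
      ext α
      simp [hval, hzero, hL0, Set.mem_Ici]
    rw [hset, csInf_Ici]
  · have hset : {α : ℝ | 0 ≤ α ∧ hRelU F 𝒞 π α = 0} = ∅ := by
      ext α
      simp [hval, hzero, hL0]
    rw [hset, Real.sInf_empty]

private lemma sInf_inter_eq_max {A B : Set ℝ}
    (hA0 : ∀ x ∈ A, (0:ℝ) ≤ x) (hB0 : ∀ x ∈ B, (0:ℝ) ≤ x)
    (hAne : A.Nonempty) (hBne : B.Nonempty)
    (hAup : ∀ x ∈ A, ∀ y, x ≤ y → y ∈ A) (hBup : ∀ x ∈ B, ∀ y, x ≤ y → y ∈ B) :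
    sInf (A ∩ B) = max (sInf A) (sInf B) := by
  have hAbd : BddBelow A := ⟨0, hA0⟩
  have hBbd : BddBelow B := ⟨0, hB0⟩
  obtain ⟨x, hx⟩ := hAne
  obtain ⟨y, hy⟩ := hBne
  have hABne : (A ∩ B).Nonempty :=
    ⟨max x y, hAup x hx _ (le_max_left _ _), hBup y hy _ (le_max_right _ _)⟩
  have hABbd : BddBelow (A ∩ B) := ⟨0, fun w hw => hA0 w hw.1⟩
  refine le_antisymm ?_ (max_le (csInf_le_csInf hAbd hABne Set.inter_subset_left)
    (csInf_le_csInf hBbd hABne Set.inter_subset_right))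
  refine le_of_forall_gt_imp_ge_of_dense fun z hz => ?_
  obtain ⟨u, hu, huz⟩ := exists_lt_of_csInf_lt ⟨x, hx⟩ (lt_of_le_of_lt (le_max_left _ _) hz)
  obtain ⟨v, hv, hvz⟩ := exists_lt_of_csInf_lt ⟨y, hy⟩ (lt_of_le_of_lt (le_max_right _ _) hz)
  exact csInf_le hABbd ⟨hAup u hu z huz.le, hBup v hv z hvz.le⟩

end Stmt5Aux

theorem stmt5 {G X Y : Type*} [Group G] [Countable G]
    [MetricSpace X] [CompactSpace X] [MetricSpace Y] [CompactSpace Y]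
    [MulAction G X] [MulAction G Y]
    (hcX : ∀ g : G, Continuous fun x : X => g • x)
    (hcY : ∀ g : G, Continuous fun y : Y => g • y)
    (π : X → Y) (hπ : IsFactorMap G π)
    (F : ℕ → Finset G) (hF : IsFolnerSeq G F) (hFmono : ∀ n, F n ⊆ F (n + 1))
    (𝒰 𝒱 : Set (Set X)) (h𝒰 : IsOpenCover 𝒰) (h𝒱 : IsOpenCover 𝒱) :
    DU F (covJoin 𝒰 𝒱) π = max (DU F 𝒰 π) (DU F 𝒱 π) := by
  classical
  obtain ⟨h𝒰fin, -, h𝒰cov⟩ := h𝒰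
  obtain ⟨h𝒱fin, -, h𝒱cov⟩ := h𝒱
  have hJfin : (covJoin 𝒰 𝒱).Finite := covJoin_finite h𝒰fin h𝒱fin
  have hJcov : ⋃₀ covJoin 𝒰 𝒱 = Set.univ := covJoin_covers h𝒰cov h𝒱cov
  have hFne : ∀ n, (F n).Nonempty := hF.1
  have hFmono' : Monotone F := monotone_nat_of_le_succ hFmono
  -- notation for the three relevant numbers
  set NU : ℕ → ℕ := fun n => NRel (dynJoin (F n) 𝒰) π with hNU
  set NV : ℕ → ℕ := fun n => NRel (dynJoin (F n) 𝒱) π with hNV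
  set NJ : ℕ → ℕ := fun n => NRel (dynJoin (F n) (covJoin 𝒰 𝒱)) π with hNJ
  -- basic inequalities between covering numbers
  have hUleJ : ∀ n, NU n ≤ NJ n := by
    intro n
    refine ciSup_le' fun y => ?_
    refine le_trans ?_ (le_ciSup (bddAbove_coverNum hJfin hJcov (F n) π) y)
    refine coverNum_le_of_refine (dynJoin_refines_left (F n) 𝒰 𝒱) ?_
    obtain ⟨t, h1, h2, -⟩ := exists_coverFinset hJfin hJcov (F n) (π ⁻¹' {y})
    exact ⟨t, h1, h2⟩
  have hVleJ : ∀ n, NV n ≤ NJ n := by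
    intro n
    refine ciSup_le' fun y => ?_
    refine le_trans ?_ (le_ciSup (bddAbove_coverNum hJfin hJcov (F n) π) y)
    refine coverNum_le_of_refine (dynJoin_refines_right (F n) 𝒰 𝒱) ?_
    obtain ⟨t, h1, h2, -⟩ := exists_coverFinset hJfin hJcov (F n) (π ⁻¹' {y})
    exact ⟨t, h1, h2⟩
  have hJleUV : ∀ n, NJ n ≤ NU n * NV n := by
    intro n
    refine ciSup_le' fun y => ?_
    have h1 : ∃ t : Finset (Set X), ↑t ⊆ dynJoin (F n) 𝒰 ∧ π ⁻¹' {y} ⊆ ⋃₀ ↑t := by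
      obtain ⟨t, ha, hb, -⟩ := exists_coverFinset h𝒰fin h𝒰cov (F n) (π ⁻¹' {y})
      exact ⟨t, ha, hb⟩
    have h2 : ∃ t : Finset (Set X), ↑t ⊆ dynJoin (F n) 𝒱 ∧ π ⁻¹' {y} ⊆ ⋃₀ ↑t := by
      obtain ⟨t, ha, hb, -⟩ := exists_coverFinset h𝒱fin h𝒱cov (F n) (π ⁻¹' {y})
      exact ⟨t, ha, hb⟩
    refine (coverNum_le_mul (dynJoin_inter_mem (F n) 𝒰 𝒱) h1 h2).trans ?_
    exact Nat.mul_le_mul (le_ciSup (bddAbove_coverNum h𝒰fin h𝒰cov (F n) π) y)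
      (le_ciSup (bddAbove_coverNum h𝒱fin h𝒱cov (F n) π) y)
  -- key equivalence
  have hkey : ∀ α : ℝ, hRelU F (covJoin 𝒰 𝒱) π α = 0 ↔
      (hRelU F 𝒰 π α = 0 ∧ hRelU F 𝒱 π α = 0) := by
    intro α
    constructor
    · intro h
      exact ⟨le_antisymm (le_trans (hRelU_le_of_NRel_le hUleJ) h.le) (zero_le),
        le_antisymm (le_trans (hRelU_le_of_NRel_le hVleJ) h.le) (zero_le)⟩
    · rintro ⟨h1, h2⟩
      have hptwise : ∀ n,
          ENNReal.ofReal (Real.log (NJ n)) / ENNReal.ofReal (((F n).card : ℝ) ^ α) ≤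
          ENNReal.ofReal (Real.log (NU n)) / ENNReal.ofReal (((F n).card : ℝ) ^ α) +
          ENNReal.ofReal (Real.log (NV n)) / ENNReal.ofReal (((F n).card : ℝ) ^ α) := by
        intro n
        have hlog : Real.log (NJ n) ≤ Real.log (NU n) + Real.log (NV n) := by
          rcases Nat.eq_zero_or_pos (NJ n) with h0 | hj
          · rw [h0]
            simpa using add_nonneg (lognat_nonneg (NU n)) (lognat_nonneg (NV n))
          · have hUV : 0 < NU n * NV n := lt_of_lt_of_le hj (hJleUV n)
            have hU0 : NU n ≠ 0 := by
              intro h0'; rw [h0'] at hUV; simp at hUV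
            have hV0 : NV n ≠ 0 := by
              intro h0'; rw [h0'] at hUV; simp at hUV
            calc Real.log (NJ n) ≤ Real.log ((NU n * NV n : ℕ)) := lognat_mono (hJleUV n)
              _ = Real.log (NU n) + Real.log (NV n) := by
                  rw [Nat.cast_mul]
                  exact Real.log_mul (by exact_mod_cast hU0) (by exact_mod_cast hV0)
        calc ENNReal.ofReal (Real.log (NJ n)) / ENNReal.ofReal (((F n).card : ℝ) ^ α)
            ≤ ENNReal.ofReal (Real.log (NU n) + Real.log (NV n)) /
              ENNReal.ofReal (((F n).card : ℝ) ^ α) :=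
              ENNReal.div_le_div_right (ENNReal.ofReal_le_ofReal hlog) _
          _ = (ENNReal.ofReal (Real.log (NU n)) + ENNReal.ofReal (Real.log (NV n))) /
              ENNReal.ofReal (((F n).card : ℝ) ^ α) := by
              rw [ENNReal.ofReal_add (lognat_nonneg _) (lognat_nonneg _)]
          _ = _ := ENNReal.add_div
      exact limsup_eq_zero_of_le_add hptwise h1 h2
  by_cases hcard : Tendsto (fun n => (F n).card) atTop atTop
  · -- growing case
    have hSU_ne : {α : ℝ | 0 ≤ α ∧ hRelU F 𝒰 π α = 0}.Nonempty :=
      ⟨2, by norm_num, hRelU_two_eq_zero hFne hcard h𝒰fin h𝒰cov π⟩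
    have hSV_ne : {α : ℝ | 0 ≤ α ∧ hRelU F 𝒱 π α = 0}.Nonempty :=
      ⟨2, by norm_num, hRelU_two_eq_zero hFne hcard h𝒱fin h𝒱cov π⟩
    have hSU_up : ∀ x ∈ {α : ℝ | 0 ≤ α ∧ hRelU F 𝒰 π α = 0}, ∀ y, x ≤ y →
        y ∈ {α : ℝ | 0 ≤ α ∧ hRelU F 𝒰 π α = 0} := fun x hx y hxy =>
      ⟨hx.1.trans hxy, le_antisymm ((hRelU_anti hFne 𝒰 π hxy).trans hx.2.le) (zero_le)⟩
    have hSV_up : ∀ x ∈ {α : ℝ | 0 ≤ α ∧ hRelU F 𝒱 π α = 0}, ∀ y, x ≤ y →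
        y ∈ {α : ℝ | 0 ≤ α ∧ hRelU F 𝒱 π α = 0} := fun x hx y hxy =>
      ⟨hx.1.trans hxy, le_antisymm ((hRelU_anti hFne 𝒱 π hxy).trans hx.2.le) (zero_le)⟩
    have hset : {α : ℝ | 0 ≤ α ∧ hRelU F (covJoin 𝒰 𝒱) π α = 0} =
        {α : ℝ | 0 ≤ α ∧ hRelU F 𝒰 π α = 0} ∩ {α : ℝ | 0 ≤ α ∧ hRelU F 𝒱 π α = 0} := by
      ext α
      simp only [Set.mem_inter_iff, Set.mem_setOf_eq]
      constructor
      · rintro ⟨h0, h⟩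
        exact ⟨⟨h0, ((hkey α).1 h).1⟩, ⟨h0, ((hkey α).1 h).2⟩⟩
      · rintro ⟨⟨h0, h1⟩, ⟨-, h2⟩⟩
        exact ⟨h0, (hkey α).2 ⟨h1, h2⟩⟩
    unfold DU
    rw [hset]
    exact sInf_inter_eq_max (fun x hx => hx.1) (fun x hx => hx.1) hSU_ne hSV_ne hSU_up hSV_up
  · -- eventually constant case
    have hmono : Monotone fun n => (F n).card := fun a b hab => Finset.card_le_card (hFmono' hab)
    have hbdd : ∃ b, ∀ n, (F n).card ≤ b := by
      by_contra hb
      push_neg at hb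
      exact hcard (tendsto_atTop_atTop_of_monotone hmono fun b => (hb b).imp fun n hn => hn.le)
    obtain ⟨b, hb⟩ := hbdd
    have hbddA : BddAbove (Set.range fun n => (F n).card) := by
      refine ⟨b, ?_⟩
      rintro _ ⟨n, rfl⟩
      exact hb n
    obtain ⟨N, hN⟩ := Nat.sSup_mem (Set.range_nonempty _) hbddA
    have hconst : ∀ n, N ≤ n → F n = F N := by
      intro n hn
      have h1 : F N ⊆ F n := hFmono' hn
      have h2 : (F n).card ≤ (F N).card := by
        have h3 : (F n).card ≤ sSup (Set.range fun n => (F n).card) :=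
          le_csSup hbddA (Set.mem_range_self n)
        rwa [← hN] at h3
      exact (Finset.eq_of_subset_of_card_le h1 h2).symm
    rw [DU_eq_zero_of_eventually_const hconst (hFne N) (covJoin 𝒰 𝒱) π,
        DU_eq_zero_of_eventually_const hconst (hFne N) 𝒰 π,
        DU_eq_zero_of_eventually_const hconst (hFne N) 𝒱 π]
    simp
end

section
/- Let π : (X,G) → (Y,G) be a factor map between G-systems and U, V finite open covers of X. Then max{D(G,U|π), D(G,V|π)} ≤ D(G, U∨V | π) ≤ max{D(G,U|π), D(G,V|π), min{D̄(G,U|π), D̄(G,V|π)}}, where D denotes the relative lower entropy dimension and D̄ the relative upper entropy dimension of a cover. -/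
open Filter Topology Pointwise
open scoped ENNReal

section AuxLemmas

open Filter

variable {G X Y : Type*} [Group G] [MulAction G X]

lemma my_dynJoin_empty (𝒲 : Set (Set X)) : dynJoin (∅ : Finset G) 𝒲 = {Set.univ} := by
  ext W
  constructor
  · rintro ⟨f, -, rfl⟩; simp
  · rintro rfl; exact ⟨fun _ => ∅, by simp, by simp⟩

lemma my_dynJoin_card_bound (𝒲 : Set (Set X)) (h : 𝒲.Finite) (B : Finset G) :
    ∃ D : Finset (Set X), dynJoin B 𝒲 ⊆ ↑D ∧ D.card ≤ h.toFinset.card ^ B.card := by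
  classical
  induction B using Finset.induction_on with
  | empty =>
    exact ⟨{Set.univ}, by rw [my_dynJoin_empty]; simp, by simp⟩
  | @insert a B ha ih =>
    obtain ⟨D, hD, hcard⟩ := ih
    refine ⟨(h.toFinset ×ˢ D).image fun p => (fun x => a • x) ⁻¹' p.1 ∩ p.2, ?_, ?_⟩
    · rintro W ⟨f, hf, rfl⟩
      have hsplit : ⋂ g ∈ insert a B, (fun x => g • x) ⁻¹' f g
          = ((fun x => a • x) ⁻¹' f a) ∩ ⋂ g ∈ B, (fun x => g • x) ⁻¹' f g := by
        simp [Set.biInter_insert]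
      have h1 : f a ∈ h.toFinset := by
        simp only [Set.Finite.mem_toFinset]; exact hf a (Finset.mem_insert_self a B)
      have h2 : (⋂ g ∈ B, (fun x => g • x) ⁻¹' f g) ∈ D :=
        hD ⟨f, fun g hg => hf g (Finset.mem_insert_of_mem hg), rfl⟩
      rw [hsplit]
      exact Finset.mem_coe.2 (Finset.mem_image.2 ⟨(f a, _), Finset.mem_product.2 ⟨h1, h2⟩, rfl⟩)
    · calc ((h.toFinset ×ˢ D).image fun p => (fun x => a • x) ⁻¹' p.1 ∩ p.2).card
          ≤ (h.toFinset ×ˢ D).card := Finset.card_image_le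
        _ = h.toFinset.card * D.card := Finset.card_product _ _
        _ ≤ h.toFinset.card * h.toFinset.card ^ B.card := Nat.mul_le_mul_left _ hcard
        _ = h.toFinset.card ^ (insert a B).card := by
            rw [Finset.card_insert_of_notMem ha, pow_succ]; ring

lemma my_dynJoin_sUnion (𝒲 : Set (Set X)) (h : ⋃₀ 𝒲 = Set.univ) (B : Finset G) :
    ⋃₀ dynJoin B 𝒲 = Set.univ := by
  classical
  ext x
  simp only [Set.mem_univ, iff_true]
  have hx : ∀ g : G, ∃ U, U ∈ 𝒲 ∧ g • x ∈ U := by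
    intro g
    have : g • x ∈ ⋃₀ 𝒲 := by rw [h]; trivial
    obtain ⟨U, hU, hgx⟩ := this
    exact ⟨U, hU, hgx⟩
  choose f hf1 hf2 using hx
  refine ⟨⋂ g ∈ B, (fun x => g • x) ⁻¹' f g, ⟨f, fun g _ => hf1 g, rfl⟩, ?_⟩
  simp only [Set.mem_iInter, Set.mem_preimage]
  exact fun g _ => hf2 g

lemma my_dynJoin_refine {𝒲 𝒲' : Set (Set X)} (h : ∀ W ∈ 𝒲', ∃ U ∈ 𝒲, W ⊆ U) (B : Finset G) :
    ∀ W ∈ dynJoin B 𝒲', ∃ W' ∈ dynJoin B 𝒲, W ⊆ W' := by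
  classical
  rintro W ⟨f, hf, rfl⟩
  have hch : ∀ g, ∃ U, g ∈ B → U ∈ 𝒲 ∧ f g ⊆ U := by
    intro g
    by_cases hg : g ∈ B
    · obtain ⟨U, hU, hsub⟩ := h (f g) (hf g hg)
      exact ⟨U, fun _ => ⟨hU, hsub⟩⟩
    · exact ⟨∅, fun hg' => absurd hg' hg⟩
  choose u hu using hch
  refine ⟨⋂ g ∈ B, (fun x => g • x) ⁻¹' u g, ⟨u, fun g hg => (hu g hg).1, rfl⟩, ?_⟩
  intro x hx
  simp only [Set.mem_iInter, Set.mem_preimage] at hx ⊢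
  exact fun g hg => (hu g hg).2 (hx g hg)

lemma my_dynJoin_inter_mem {𝒰 𝒱 : Set (Set X)} (B : Finset G) :
    ∀ W1 ∈ dynJoin B 𝒰, ∀ W2 ∈ dynJoin B 𝒱, W1 ∩ W2 ∈ dynJoin B (covJoin 𝒰 𝒱) := by
  rintro W1 ⟨f, hf, rfl⟩ W2 ⟨f', hf', rfl⟩
  refine ⟨fun g => f g ∩ f' g, fun g hg => ⟨f g, hf g hg, f' g, hf' g hg, rfl⟩, ?_⟩
  ext x
  simp only [Set.mem_inter_iff, Set.mem_iInter, Set.mem_preimage]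
  constructor
  · rintro ⟨h1, h2⟩; exact fun g hg => ⟨h1 g hg, h2 g hg⟩
  · intro h; exact ⟨fun g hg => (h g hg).1, fun g hg => (h g hg).2⟩

lemma my_exists_finset_cover {𝒲 : Set (Set X)} (D : Finset (Set X)) (hD : 𝒲 ⊆ ↑D)
    (E : Set X) (hcov : E ⊆ ⋃₀ 𝒲) :
    ∃ t : Finset (Set X), ↑t ⊆ 𝒲 ∧ E ⊆ ⋃₀ (t : Set (Set X)) := by
  classical
  refine ⟨D.filter (fun W => W ∈ 𝒲), fun W hW => by
    simpa using (Finset.mem_filter.1 (Finset.mem_coe.1 hW)).2, fun x hx => ?_⟩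
  obtain ⟨W, hW, hxW⟩ := hcov hx
  refine ⟨W, ?_, hxW⟩
  rw [Finset.mem_coe, Finset.mem_filter]
  exact ⟨Finset.mem_coe.1 (hD hW), hW⟩

lemma my_coverNum_le_card {𝒲 : Set (Set X)} {D : Finset (Set X)} {E : Set X}
    (hsub : 𝒲 ⊆ ↑D) (hcov : E ⊆ ⋃₀ 𝒲) : coverNum 𝒲 E ≤ D.card := by
  classical
  have h1 : ((D.filter (fun W => W ∈ 𝒲) : Finset (Set X)) : Set (Set X)) ⊆ 𝒲 := by
    intro W hW; simpa using (Finset.mem_filter.1 (Finset.mem_coe.1 hW)).2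
  have h2 : E ⊆ ⋃₀ ((D.filter (fun W => W ∈ 𝒲) : Finset (Set X)) : Set (Set X)) := by
    intro x hx
    obtain ⟨W, hW, hxW⟩ := hcov hx
    refine ⟨W, ?_, hxW⟩
    rw [Finset.mem_coe, Finset.mem_filter]
    exact ⟨Finset.mem_coe.1 (hsub hW), hW⟩
  calc coverNum 𝒲 E ≤ (D.filter (fun W => W ∈ 𝒲)).card := Nat.sInf_le ⟨_, h1, rfl, h2⟩
    _ ≤ D.card := Finset.card_filter_le _ _

lemma my_coverNum_spec {𝒲 : Set (Set X)} {E : Set X}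
    (hne : ∃ t : Finset (Set X), ↑t ⊆ 𝒲 ∧ E ⊆ ⋃₀ (t : Set (Set X))) :
    ∃ t : Finset (Set X), ↑t ⊆ 𝒲 ∧ t.card = coverNum 𝒲 E ∧ E ⊆ ⋃₀ (t : Set (Set X)) := by
  have : coverNum 𝒲 E ∈
      {k | ∃ t : Finset (Set X), ↑t ⊆ 𝒲 ∧ t.card = k ∧ E ⊆ ⋃₀ (t : Set (Set X))} :=
    Nat.sInf_mem (by obtain ⟨t, h1, h2⟩ := hne; exact ⟨t.card, t, h1, rfl, h2⟩)
  exact this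

lemma my_coverNum_mono_refine {𝒲 𝒲' : Set (Set X)} {E : Set X}
    (href : ∀ W ∈ 𝒲', ∃ W'' ∈ 𝒲, W ⊆ W'')
    (hne : ∃ t : Finset (Set X), ↑t ⊆ 𝒲' ∧ E ⊆ ⋃₀ (t : Set (Set X))) :
    coverNum 𝒲 E ≤ coverNum 𝒲' E := by
  classical
  obtain ⟨t, ht1, ht2, ht3⟩ := my_coverNum_spec hne
  choose r hr1 hr2 using href
  set r' : Set X → Set X := fun W => if h : W ∈ 𝒲' then r W h else ∅ with hr'
  have hsub : ((t.image r' : Finset (Set X)) : Set (Set X)) ⊆ 𝒲 := by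
    intro W' hW'
    obtain ⟨W, hW, rfl⟩ := Finset.mem_image.1 (Finset.mem_coe.1 hW')
    have hmem : W ∈ 𝒲' := ht1 hW
    simp only [hr', dif_pos hmem]
    exact hr1 W hmem
  have hcov : E ⊆ ⋃₀ ((t.image r' : Finset (Set X)) : Set (Set X)) := by
    intro x hx
    obtain ⟨W, hW, hxW⟩ := ht3 hx
    have hmem : W ∈ 𝒲' := ht1 hW
    refine ⟨r' W, Finset.mem_coe.2 (Finset.mem_image.2 ⟨W, Finset.mem_coe.1 hW, rfl⟩), ?_⟩
    simp only [hr', dif_pos hmem]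
    exact hr2 W hmem hxW
  calc coverNum 𝒲 E ≤ (t.image r').card := Nat.sInf_le ⟨_, hsub, rfl, hcov⟩
    _ ≤ t.card := Finset.card_image_le
    _ = coverNum 𝒲' E := ht2

lemma my_coverNum_mul {𝒲 𝒲₁ 𝒲₂ : Set (Set X)} {E : Set X}
    (hcomb : ∀ W1 ∈ 𝒲₁, ∀ W2 ∈ 𝒲₂, W1 ∩ W2 ∈ 𝒲)
    (hne1 : ∃ t : Finset (Set X), ↑t ⊆ 𝒲₁ ∧ E ⊆ ⋃₀ (t : Set (Set X)))
    (hne2 : ∃ t : Finset (Set X), ↑t ⊆ 𝒲₂ ∧ E ⊆ ⋃₀ (t : Set (Set X))) :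
    coverNum 𝒲 E ≤ coverNum 𝒲₁ E * coverNum 𝒲₂ E := by
  classical
  obtain ⟨t1, h11, h12, h13⟩ := my_coverNum_spec hne1
  obtain ⟨t2, h21, h22, h23⟩ := my_coverNum_spec hne2
  have hsub : (((t1 ×ˢ t2).image fun p => p.1 ∩ p.2 : Finset (Set X)) : Set (Set X)) ⊆ 𝒲 := by
    intro W hW
    obtain ⟨p, hp, rfl⟩ := Finset.mem_image.1 (Finset.mem_coe.1 hW)
    obtain ⟨hp1, hp2⟩ := Finset.mem_product.1 hp
    exact hcomb _ (h11 hp1) _ (h21 hp2)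
  have hcov : E ⊆ ⋃₀ (((t1 ×ˢ t2).image fun p => p.1 ∩ p.2 : Finset (Set X)) : Set (Set X)) := by
    intro x hx
    obtain ⟨W1, hW1, hxW1⟩ := h13 hx
    obtain ⟨W2, hW2, hxW2⟩ := h23 hx
    refine ⟨W1 ∩ W2, Finset.mem_coe.2 (Finset.mem_image.2
      ⟨(W1, W2), Finset.mem_product.2 ⟨Finset.mem_coe.1 hW1, Finset.mem_coe.1 hW2⟩, rfl⟩),
      hxW1, hxW2⟩
  calc coverNum 𝒲 E ≤ ((t1 ×ˢ t2).image fun p => p.1 ∩ p.2).card :=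
        Nat.sInf_le ⟨_, hsub, rfl, hcov⟩
    _ ≤ (t1 ×ˢ t2).card := Finset.card_image_le
    _ = t1.card * t2.card := Finset.card_product _ _
    _ = coverNum 𝒲₁ E * coverNum 𝒲₂ E := by rw [h12, h22]

lemma my_NRel_le_card {𝒲 : Set (Set X)} (π : X → Y) (D : Finset (Set X))
    (hD : 𝒲 ⊆ ↑D) (hcov : ⋃₀ 𝒲 = Set.univ) : NRel 𝒲 π ≤ D.card :=
  ciSup_le' fun y => my_coverNum_le_card hD (by rw [hcov]; exact Set.subset_univ _)

lemma my_NRel_mono {𝒲 𝒲' : Set (Set X)} (π : X → Y)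
    (href : ∀ W ∈ 𝒲', ∃ U ∈ 𝒲, W ⊆ U)
    (D' : Finset (Set X)) (hD' : 𝒲' ⊆ ↑D') (hcov' : ⋃₀ 𝒲' = Set.univ) :
    NRel 𝒲 π ≤ NRel 𝒲' π := by
  refine ciSup_le' fun y => ?_
  have hbdd : BddAbove (Set.range fun y : Y => coverNum 𝒲' (π ⁻¹' {y})) := by
    refine ⟨D'.card, ?_⟩
    rintro _ ⟨y, rfl⟩
    exact my_coverNum_le_card hD' (by rw [hcov']; exact Set.subset_univ _)
  calc coverNum 𝒲 (π ⁻¹' {y}) ≤ coverNum 𝒲' (π ⁻¹' {y}) :=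
        my_coverNum_mono_refine href
          (my_exists_finset_cover D' hD' _ (by rw [hcov']; exact Set.subset_univ _))
    _ ≤ NRel 𝒲' π := le_ciSup hbdd y

lemma my_NRel_mul {𝒲 𝒲₁ 𝒲₂ : Set (Set X)} (π : X → Y)
    (hcomb : ∀ W1 ∈ 𝒲₁, ∀ W2 ∈ 𝒲₂, W1 ∩ W2 ∈ 𝒲)
    (D1 : Finset (Set X)) (hD1 : 𝒲₁ ⊆ ↑D1) (hcov1 : ⋃₀ 𝒲₁ = Set.univ)
    (D2 : Finset (Set X)) (hD2 : 𝒲₂ ⊆ ↑D2) (hcov2 : ⋃₀ 𝒲₂ = Set.univ) :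
    NRel 𝒲 π ≤ NRel 𝒲₁ π * NRel 𝒲₂ π := by
  refine ciSup_le' fun y => ?_
  have hbdd1 : BddAbove (Set.range fun y : Y => coverNum 𝒲₁ (π ⁻¹' {y})) := by
    refine ⟨D1.card, ?_⟩
    rintro _ ⟨y, rfl⟩
    exact my_coverNum_le_card hD1 (by rw [hcov1]; exact Set.subset_univ _)
  have hbdd2 : BddAbove (Set.range fun y : Y => coverNum 𝒲₂ (π ⁻¹' {y})) := by
    refine ⟨D2.card, ?_⟩
    rintro _ ⟨y, rfl⟩
    exact my_coverNum_le_card hD2 (by rw [hcov2]; exact Set.subset_univ _)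
  calc coverNum 𝒲 (π ⁻¹' {y})
      ≤ coverNum 𝒲₁ (π ⁻¹' {y}) * coverNum 𝒲₂ (π ⁻¹' {y}) :=
        my_coverNum_mul hcomb
          (my_exists_finset_cover D1 hD1 _ (by rw [hcov1]; exact Set.subset_univ _))
          (my_exists_finset_cover D2 hD2 _ (by rw [hcov2]; exact Set.subset_univ _))
    _ ≤ NRel 𝒲₁ π * NRel 𝒲₂ π := Nat.mul_le_mul (le_ciSup hbdd1 y) (le_ciSup hbdd2 y)

lemma my_log_nat_mono {m n : ℕ} (h : m ≤ n) : Real.log m ≤ Real.log n := by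
  rcases Nat.eq_zero_or_pos m with rfl | hm
  · simpa using Real.log_natCast_nonneg n
  · exact Real.log_le_log (by exact_mod_cast hm) (by exact_mod_cast h)

lemma my_log_nat_mul (m n : ℕ) : Real.log (m * n : ℕ) ≤ Real.log m + Real.log n := by
  rcases Nat.eq_zero_or_pos m with rfl | hm
  · simpa using add_nonneg (Real.log_natCast_nonneg 0) (Real.log_natCast_nonneg n)
  rcases Nat.eq_zero_or_pos n with rfl | hn
  · simpa using add_nonneg (Real.log_natCast_nonneg m) (Real.log_natCast_nonneg 0)
  rw [show ((m * n : ℕ) : ℝ) = (m : ℝ) * (n : ℝ) by push_cast; ring,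
    Real.log_mul (by positivity) (by positivity)]

lemma my_liminf_eq_zero_of_le_add {u v w : ℕ → ℝ≥0∞}
    (hu : atTop.limsup u = 0) (hv : atTop.liminf v = 0) (hw : ∀ n, w n ≤ u n + v n) :
    atTop.liminf w = 0 := by
  refine le_antisymm ?_ zero_le
  refine ENNReal.le_of_forall_pos_le_add fun ε hε _ => ?_
  rw [zero_add]
  have hε2 : (0 : ℝ≥0∞) < (ε : ℝ≥0∞) / 2 :=
    ENNReal.div_pos (by exact_mod_cast hε.ne') (by norm_num)
  have h1 : ∀ᶠ n in atTop, u n < (ε : ℝ≥0∞) / 2 :=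
    eventually_lt_of_limsup_lt (by rw [hu]; exact hε2)
  have h2 : ∃ᶠ n in atTop, v n < (ε : ℝ≥0∞) / 2 :=
    frequently_lt_of_liminf_lt (by isBoundedDefault) (by rw [hv]; exact hε2)
  have h3 : ∃ᶠ n in atTop, w n ≤ (ε : ℝ≥0∞) := by
    refine (h2.and_eventually h1).mono ?_
    rintro n ⟨hv', hu'⟩
    calc w n ≤ u n + v n := hw n
      _ ≤ (ε : ℝ≥0∞) / 2 + (ε : ℝ≥0∞) / 2 := add_le_add hu'.le hv'.le
      _ = ε := ENNReal.add_halves _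
  exact liminf_le_of_frequently_le' h3

end AuxLemmas

section AuxLemmas2

open Filter

variable {G X Y : Type*} [Group G] [MulAction G X]

lemma my_hRel_anti (F : ℕ → Finset G) (hFne : ∀ n, (F n).Nonempty)
    (𝒲 : Set (Set X)) (π : X → Y) {α β : ℝ} (h : α ≤ β) (n : ℕ) :
    ENNReal.ofReal (Real.log (NRel (dynJoin (F n) 𝒲) π)) /
      ENNReal.ofReal (((F n).card : ℝ) ^ β) ≤
    ENNReal.ofReal (Real.log (NRel (dynJoin (F n) 𝒲) π)) /
      ENNReal.ofReal (((F n).card : ℝ) ^ α) := by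
  have h1 : (1 : ℝ) ≤ ((F n).card : ℝ) := by
    exact_mod_cast (hFne n).card_pos
  have hle : ENNReal.ofReal (((F n).card : ℝ) ^ α) ≤ ENNReal.ofReal (((F n).card : ℝ) ^ β) :=
    ENNReal.ofReal_le_ofReal (Real.rpow_le_rpow_of_exponent_le h1 h)
  rw [div_eq_mul_inv, div_eq_mul_inv]
  exact mul_le_mul_right (ENNReal.inv_le_inv.2 hle) _

lemma my_hRelU_zero (F : ℕ → Finset G) (hFne : ∀ n, (F n).Nonempty)
    (htend : Tendsto (fun n => (F n).card) atTop atTop)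
    {𝒲 : Set (Set X)} (hfin : 𝒲.Finite) (hcov : ⋃₀ 𝒲 = Set.univ)
    (π : X → Y) {α : ℝ} (hα : 1 < α) : hRelU F 𝒲 π α = 0 := by
  classical
  set C : ℕ := hfin.toFinset.card with hC
  set L : ℝ := Real.log (max (C : ℝ) 1) with hLdef
  have hL0 : 0 ≤ L := Real.log_nonneg (le_max_right _ _)
  have hNle : ∀ n, (NRel (dynJoin (F n) 𝒲) π : ℝ) ≤ (max (C : ℝ) 1) ^ (F n).card := by
    intro n
    obtain ⟨D, hD, hDcard⟩ := my_dynJoin_card_bound 𝒲 hfin (F n)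
    have h1 : NRel (dynJoin (F n) 𝒲) π ≤ C ^ (F n).card :=
      le_trans (my_NRel_le_card π D hD (my_dynJoin_sUnion 𝒲 hcov (F n))) hDcard
    calc (NRel (dynJoin (F n) 𝒲) π : ℝ) ≤ ((C : ℝ)) ^ (F n).card := by exact_mod_cast h1
      _ ≤ (max (C : ℝ) 1) ^ (F n).card :=
        pow_le_pow_left₀ (by positivity) (le_max_left _ _) _
  have hlog : ∀ n, Real.log (NRel (dynJoin (F n) 𝒲) π) ≤ ((F n).card : ℝ) * L := by
    intro n
    rcases Nat.eq_zero_or_pos (NRel (dynJoin (F n) 𝒲) π) with h0 | hpos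
    · rw [h0]
      simpa using mul_nonneg (by positivity) hL0
    · calc Real.log (NRel (dynJoin (F n) 𝒲) π)
          ≤ Real.log ((max (C : ℝ) 1) ^ (F n).card) :=
            Real.log_le_log (by exact_mod_cast hpos) (hNle n)
        _ = ((F n).card : ℝ) * L := by rw [Real.log_pow, hLdef]
  have hkey : ∀ n, ENNReal.ofReal (Real.log (NRel (dynJoin (F n) 𝒲) π)) /
      ENNReal.ofReal (((F n).card : ℝ) ^ α)
      ≤ ENNReal.ofReal (L * ((F n).card : ℝ) ^ (1 - α)) := by
    intro n
    have hk1 : (1 : ℝ) ≤ ((F n).card : ℝ) := by exact_mod_cast (hFne n).card_pos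
    have hkpos : (0 : ℝ) < ((F n).card : ℝ) := lt_of_lt_of_le one_pos hk1
    have hrpos : (0 : ℝ) < ((F n).card : ℝ) ^ α := Real.rpow_pos_of_pos hkpos α
    have harith : ((F n).card : ℝ) * L / ((F n).card : ℝ) ^ α
        = L * ((F n).card : ℝ) ^ (1 - α) := by
      rw [Real.rpow_sub hkpos, Real.rpow_one]
      field_simp
    calc ENNReal.ofReal (Real.log (NRel (dynJoin (F n) 𝒲) π)) /
          ENNReal.ofReal (((F n).card : ℝ) ^ α)
        ≤ ENNReal.ofReal (((F n).card : ℝ) * L) / ENNReal.ofReal (((F n).card : ℝ) ^ α) :=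
          ENNReal.div_le_div_right (ENNReal.ofReal_le_ofReal (hlog n)) _
      _ = ENNReal.ofReal (((F n).card : ℝ) * L / ((F n).card : ℝ) ^ α) :=
          (ENNReal.ofReal_div_of_pos hrpos).symm
      _ = ENNReal.ofReal (L * ((F n).card : ℝ) ^ (1 - α)) := by rw [harith]
  have htendR : Tendsto (fun n => ((F n).card : ℝ)) atTop atTop :=
    tendsto_natCast_atTop_atTop.comp htend
  have ht2 : Tendsto (fun x : ℝ => L * x ^ (1 - α)) atTop (nhds 0) := by
    have := (tendsto_rpow_neg_atTop (by linarith : (0 : ℝ) < α - 1)).const_mul L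
    rw [mul_zero] at this
    simpa [show -(α - 1) = 1 - α by ring] using this
  have ht3 : Tendsto (fun n => ENNReal.ofReal (L * ((F n).card : ℝ) ^ (1 - α)))
      atTop (nhds 0) := by
    have := (ENNReal.continuous_ofReal.tendsto 0).comp ((ht2.comp htendR))
    simpa [Function.comp_def] using this
  refine le_antisymm ?_ zero_le
  calc hRelU F 𝒲 π α
      ≤ atTop.limsup (fun n => ENNReal.ofReal (L * ((F n).card : ℝ) ^ (1 - α))) :=
        limsup_le_limsup (Eventually.of_forall hkey)
    _ = 0 := ht3.limsup_eq

lemma my_sInf_zero (P : ℝ → ℝ≥0∞) (hP : ∀ α β : ℝ, (P α = 0 ↔ P β = 0)) :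
    sInf {α : ℝ | 0 ≤ α ∧ P α = 0} = 0 := by
  by_cases h0 : P 0 = 0
  · have : {α : ℝ | 0 ≤ α ∧ P α = 0} = Set.Ici 0 := by
      ext α
      simp only [Set.mem_setOf_eq, Set.mem_Ici, and_iff_left_iff_imp]
      exact fun _ => (hP α 0).2 h0
    rw [this, csInf_Ici]
  · have : {α : ℝ | 0 ≤ α ∧ P α = 0} = ∅ := by
      ext α
      simp only [Set.mem_setOf_eq, Set.mem_empty_iff_false, iff_false, not_and]
      exact fun _ hPα => h0 ((hP α 0).1 hPα)
    rw [this, Real.sInf_empty]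

end AuxLemmas2

theorem stmt6 {G X Y : Type*} [Group G] [Countable G]
    [MetricSpace X] [CompactSpace X] [MetricSpace Y] [CompactSpace Y]
    [MulAction G X] [MulAction G Y]
    (hcX : ∀ g : G, Continuous fun x : X => g • x)
    (hcY : ∀ g : G, Continuous fun y : Y => g • y)
    (π : X → Y) (hπ : IsFactorMap G π)
    (F : ℕ → Finset G) (hF : IsFolnerSeq G F) (hFmono : ∀ n, F n ⊆ F (n + 1))
    (𝒰 𝒱 : Set (Set X)) (h𝒰 : IsOpenCover 𝒰) (h𝒱 : IsOpenCover 𝒱) :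
    max (DL F 𝒰 π) (DL F 𝒱 π) ≤ DL F (covJoin 𝒰 𝒱) π ∧
    DL F (covJoin 𝒰 𝒱) π ≤
      max (max (DL F 𝒰 π) (DL F 𝒱 π)) (min (DU F 𝒰 π) (DU F 𝒱 π)) := by
  classical
  have hFne : ∀ n, (F n).Nonempty := hF.1
  have hmonoF : Monotone F := monotone_nat_of_le_succ hFmono
  have hJfin : (covJoin 𝒰 𝒱).Finite := by
    have hsub : covJoin 𝒰 𝒱 ⊆ Set.image2 (fun U V => U ∩ V) 𝒰 𝒱 := by
      rintro W ⟨U, hU, V, hV, rfl⟩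
      exact ⟨U, hU, V, hV, rfl⟩
    exact (Set.Finite.image2 _ h𝒰.1 h𝒱.1).subset hsub
  have hJcov : ⋃₀ covJoin 𝒰 𝒱 = Set.univ := by
    ext x
    simp only [Set.mem_univ, iff_true]
    have hxU : x ∈ ⋃₀ 𝒰 := by rw [h𝒰.2.2]; trivial
    have hxV : x ∈ ⋃₀ 𝒱 := by rw [h𝒱.2.2]; trivial
    obtain ⟨U, hU, hxU⟩ := hxU
    obtain ⟨V, hV, hxV⟩ := hxV
    exact ⟨U ∩ V, ⟨U, hU, V, hV, rfl⟩, hxU, hxV⟩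
  -- per-n NRel inequalities
  have hNU : ∀ n, NRel (dynJoin (F n) 𝒰) π ≤ NRel (dynJoin (F n) (covJoin 𝒰 𝒱)) π := by
    intro n
    obtain ⟨D, hD, -⟩ := my_dynJoin_card_bound (covJoin 𝒰 𝒱) hJfin (F n)
    refine my_NRel_mono π (my_dynJoin_refine ?_ (F n)) D hD (my_dynJoin_sUnion _ hJcov (F n))
    rintro W ⟨U, hU, V, hV, rfl⟩
    exact ⟨U, hU, Set.inter_subset_left⟩
  have hNV : ∀ n, NRel (dynJoin (F n) 𝒱) π ≤ NRel (dynJoin (F n) (covJoin 𝒰 𝒱)) π := by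
    intro n
    obtain ⟨D, hD, -⟩ := my_dynJoin_card_bound (covJoin 𝒰 𝒱) hJfin (F n)
    refine my_NRel_mono π (my_dynJoin_refine ?_ (F n)) D hD (my_dynJoin_sUnion _ hJcov (F n))
    rintro W ⟨U, hU, V, hV, rfl⟩
    exact ⟨V, hV, Set.inter_subset_right⟩
  have hNJ : ∀ n, NRel (dynJoin (F n) (covJoin 𝒰 𝒱)) π ≤
      NRel (dynJoin (F n) 𝒰) π * NRel (dynJoin (F n) 𝒱) π := by
    intro n
    obtain ⟨D1, hD1, -⟩ := my_dynJoin_card_bound 𝒰 h𝒰.1 (F n)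
    obtain ⟨D2, hD2, -⟩ := my_dynJoin_card_bound 𝒱 h𝒱.1 (F n)
    exact my_NRel_mul π (my_dynJoin_inter_mem (F n)) D1 hD1
      (my_dynJoin_sUnion _ h𝒰.2.2 (F n)) D2 hD2 (my_dynJoin_sUnion _ h𝒱.2.2 (F n))
  -- pointwise term inequalities
  have hptU : ∀ (α : ℝ) (n : ℕ),
      ENNReal.ofReal (Real.log (NRel (dynJoin (F n) 𝒰) π)) /
        ENNReal.ofReal (((F n).card : ℝ) ^ α) ≤
      ENNReal.ofReal (Real.log (NRel (dynJoin (F n) (covJoin 𝒰 𝒱)) π)) /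
        ENNReal.ofReal (((F n).card : ℝ) ^ α) :=
    fun α n => ENNReal.div_le_div_right
      (ENNReal.ofReal_le_ofReal (my_log_nat_mono (hNU n))) _
  have hptV : ∀ (α : ℝ) (n : ℕ),
      ENNReal.ofReal (Real.log (NRel (dynJoin (F n) 𝒱) π)) /
        ENNReal.ofReal (((F n).card : ℝ) ^ α) ≤
      ENNReal.ofReal (Real.log (NRel (dynJoin (F n) (covJoin 𝒰 𝒱)) π)) /
        ENNReal.ofReal (((F n).card : ℝ) ^ α) :=
    fun α n => ENNReal.div_le_div_right
      (ENNReal.ofReal_le_ofReal (my_log_nat_mono (hNV n))) _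
  have hptJ : ∀ (α : ℝ) (n : ℕ),
      ENNReal.ofReal (Real.log (NRel (dynJoin (F n) (covJoin 𝒰 𝒱)) π)) /
        ENNReal.ofReal (((F n).card : ℝ) ^ α) ≤
      ENNReal.ofReal (Real.log (NRel (dynJoin (F n) 𝒰) π)) /
        ENNReal.ofReal (((F n).card : ℝ) ^ α) +
      ENNReal.ofReal (Real.log (NRel (dynJoin (F n) 𝒱) π)) /
        ENNReal.ofReal (((F n).card : ℝ) ^ α) := by
    intro α n
    rw [ENNReal.div_add_div_same]
    refine ENNReal.div_le_div_right ?_ _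
    calc ENNReal.ofReal (Real.log (NRel (dynJoin (F n) (covJoin 𝒰 𝒱)) π))
        ≤ ENNReal.ofReal (Real.log ((NRel (dynJoin (F n) 𝒰) π * NRel (dynJoin (F n) 𝒱) π : ℕ))) :=
          ENNReal.ofReal_le_ofReal (my_log_nat_mono (hNJ n))
      _ ≤ ENNReal.ofReal (Real.log (NRel (dynJoin (F n) 𝒰) π) +
            Real.log (NRel (dynJoin (F n) 𝒱) π)) :=
          ENNReal.ofReal_le_ofReal (my_log_nat_mul _ _)
      _ = _ := ENNReal.ofReal_add (Real.log_natCast_nonneg _) (Real.log_natCast_nonneg _)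
  by_cases htend : Tendsto (fun n => (F n).card) atTop atTop
  · -- Case A : |F n| → ∞
    have h2U : hRelU F 𝒰 π 2 = 0 := my_hRelU_zero F hFne htend h𝒰.1 h𝒰.2.2 π one_lt_two
    have h2V : hRelU F 𝒱 π 2 = 0 := my_hRelU_zero F hFne htend h𝒱.1 h𝒱.2.2 π one_lt_two
    have h2J : hRelU F (covJoin 𝒰 𝒱) π 2 = 0 := my_hRelU_zero F hFne htend hJfin hJcov π one_lt_two
    have hLofU : ∀ (𝒲 : Set (Set X)), hRelU F 𝒲 π 2 = 0 → hRelL F 𝒲 π 2 = 0 := by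
      intro 𝒲 h
      refine le_antisymm ?_ zero_le
      rw [← h]
      exact liminf_le_limsup
    have hclosL : ∀ (𝒲 : Set (Set X)) {β α : ℝ}, β ≤ α →
        hRelL F 𝒲 π β = 0 → hRelL F 𝒲 π α = 0 := by
      intro 𝒲 β α hβα h
      refine le_antisymm ?_ zero_le
      rw [← h]
      unfold hRelL
      exact liminf_le_liminf (Eventually.of_forall (my_hRel_anti F hFne 𝒲 π hβα))
    have hclosU : ∀ (𝒲 : Set (Set X)) {β α : ℝ}, β ≤ α →
        hRelU F 𝒲 π β = 0 → hRelU F 𝒲 π α = 0 := by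
      intro 𝒲 β α hβα h
      refine le_antisymm ?_ zero_le
      rw [← h]
      unfold hRelU
      exact limsup_le_limsup (Eventually.of_forall (my_hRel_anti F hFne 𝒲 π hβα))
    have hfromL : ∀ (𝒲 : Set (Set X)), hRelL F 𝒲 π 2 = 0 →
        ∀ α : ℝ, DL F 𝒲 π < α → hRelL F 𝒲 π α = 0 := by
      intro 𝒲 h2 α hα
      unfold DL at hα
      have hne : (2 : ℝ) ∈ {α : ℝ | 0 ≤ α ∧ hRelL F 𝒲 π α = 0} := ⟨by norm_num, h2⟩
      obtain ⟨β, hβ, hβα⟩ := exists_lt_of_csInf_lt ⟨2, hne⟩ hα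
      exact hclosL 𝒲 hβα.le hβ.2
    have hfromU : ∀ (𝒲 : Set (Set X)), hRelU F 𝒲 π 2 = 0 →
        ∀ α : ℝ, DU F 𝒲 π < α → hRelU F 𝒲 π α = 0 := by
      intro 𝒲 h2 α hα
      unfold DU at hα
      have hne : (2 : ℝ) ∈ {α : ℝ | 0 ≤ α ∧ hRelU F 𝒲 π α = 0} := ⟨by norm_num, h2⟩
      obtain ⟨β, hβ, hβα⟩ := exists_lt_of_csInf_lt ⟨2, hne⟩ hα
      exact hclosU 𝒲 hβα.le hβ.2
    have hJne : {α : ℝ | 0 ≤ α ∧ hRelL F (covJoin 𝒰 𝒱) π α = 0}.Nonempty :=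
      ⟨2, by norm_num, hLofU _ h2J⟩
    constructor
    · have hsubU : {α : ℝ | 0 ≤ α ∧ hRelL F (covJoin 𝒰 𝒱) π α = 0} ⊆
          {α : ℝ | 0 ≤ α ∧ hRelL F 𝒰 π α = 0} := by
        rintro α ⟨h0, hα⟩
        refine ⟨h0, le_antisymm ?_ zero_le⟩
        rw [← hα]
        unfold hRelL
        exact liminf_le_liminf (Eventually.of_forall (hptU α))
      have hsubV : {α : ℝ | 0 ≤ α ∧ hRelL F (covJoin 𝒰 𝒱) π α = 0} ⊆
          {α : ℝ | 0 ≤ α ∧ hRelL F 𝒱 π α = 0} := by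
        rintro α ⟨h0, hα⟩
        refine ⟨h0, le_antisymm ?_ zero_le⟩
        rw [← hα]
        unfold hRelL
        exact liminf_le_liminf (Eventually.of_forall (hptV α))
      unfold DL
      exact max_le (csInf_le_csInf ⟨0, fun x hx => hx.1⟩ hJne hsubU)
        (csInf_le_csInf ⟨0, fun x hx => hx.1⟩ hJne hsubV)
    · refine le_of_forall_gt_imp_ge_of_dense fun α hα => ?_
      have hDL𝒰0 : 0 ≤ DL F 𝒰 π := by
        unfold DL
        exact Real.sInf_nonneg fun x hx => hx.1
      have hα0 : (0 : ℝ) ≤ α :=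
        le_of_lt (lt_of_le_of_lt
          (le_trans hDL𝒰0 (le_trans (le_max_left _ _) (le_max_left _ _))) hα)
      have hLUα : hRelL F 𝒰 π α = 0 :=
        hfromL 𝒰 (hLofU 𝒰 h2U) α
          (lt_of_le_of_lt (le_trans (le_max_left _ _) (le_max_left _ _)) hα)
      have hLVα : hRelL F 𝒱 π α = 0 :=
        hfromL 𝒱 (hLofU 𝒱 h2V) α
          (lt_of_le_of_lt (le_trans (le_max_right _ _) (le_max_left _ _)) hα)
      have hminα : min (DU F 𝒰 π) (DU F 𝒱 π) < α := lt_of_le_of_lt (le_max_right _ _) hα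
      have hJα : hRelL F (covJoin 𝒰 𝒱) π α = 0 := by
        rcases le_total (DU F 𝒰 π) (DU F 𝒱 π) with hc | hc
        · have hUα : hRelU F 𝒰 π α = 0 := hfromU 𝒰 h2U α (by rwa [min_eq_left hc] at hminα)
          unfold hRelU at hUα
          unfold hRelL at hLVα ⊢
          exact my_liminf_eq_zero_of_le_add hUα hLVα (hptJ α)
        · have hVα : hRelU F 𝒱 π α = 0 := hfromU 𝒱 h2V α (by rwa [min_eq_right hc] at hminα)
          unfold hRelU at hVα
          unfold hRelL at hLUα ⊢
          exact my_liminf_eq_zero_of_le_add hVα hLUα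
            (fun n => le_trans (hptJ α n) (by rw [add_comm]))
      unfold DL
      exact csInf_le ⟨0, fun x hx => hx.1⟩ ⟨hα0, hJα⟩
  · -- Case B : F eventually constant
    have hbdd : ∃ C, ∀ n, (F n).card ≤ C := by
      by_contra hC
      push_neg at hC
      refine htend (tendsto_atTop.2 fun b => ?_)
      obtain ⟨n, hn⟩ := hC b
      exact eventually_atTop.2
        ⟨n, fun m hm => le_trans hn.le (Finset.card_le_card (hmonoF hm))⟩
    obtain ⟨C, hC⟩ := hbdd
    have hconst : ∃ N, ∀ m, N ≤ m → F m = F N := by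
      by_contra h
      push_neg at h
      have grow : ∀ k : ℕ, ∃ n, k ≤ (F n).card := by
        intro k
        induction k with
        | zero => exact ⟨0, Nat.zero_le _⟩
        | succ k ih =>
          obtain ⟨n, hn⟩ := ih
          obtain ⟨m, hm, hne⟩ := h n
          have hlt : F n < F m := lt_of_le_of_ne (hmonoF hm) (Ne.symm hne)
          exact ⟨m, Nat.succ_le_of_lt (lt_of_le_of_lt hn (Finset.card_lt_card hlt))⟩
      obtain ⟨n, hn⟩ := grow (C + 1)
      exact absurd (hC n) (by omega)
    obtain ⟨N, hN⟩ := hconst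
    have hvalL : ∀ (𝒲 : Set (Set X)) (α : ℝ), hRelL F 𝒲 π α =
        ENNReal.ofReal (Real.log (NRel (dynJoin (F N) 𝒲) π)) /
          ENNReal.ofReal (((F N).card : ℝ) ^ α) := by
      intro 𝒲 α
      unfold hRelL
      have hev : ∀ᶠ n in atTop,
          (ENNReal.ofReal (Real.log (NRel (dynJoin (F n) 𝒲) π)) /
            ENNReal.ofReal (((F n).card : ℝ) ^ α)) =
          ENNReal.ofReal (Real.log (NRel (dynJoin (F N) 𝒲) π)) /
            ENNReal.ofReal (((F N).card : ℝ) ^ α) :=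
        eventually_atTop.2 ⟨N, fun m hm => by rw [hN m hm]⟩
      rw [liminf_congr hev, liminf_const]
    have hvalU : ∀ (𝒲 : Set (Set X)) (α : ℝ), hRelU F 𝒲 π α =
        ENNReal.ofReal (Real.log (NRel (dynJoin (F N) 𝒲) π)) /
          ENNReal.ofReal (((F N).card : ℝ) ^ α) := by
      intro 𝒲 α
      unfold hRelU
      have hev : ∀ᶠ n in atTop,
          (ENNReal.ofReal (Real.log (NRel (dynJoin (F n) 𝒲) π)) /
            ENNReal.ofReal (((F n).card : ℝ) ^ α)) =
          ENNReal.ofReal (Real.log (NRel (dynJoin (F N) 𝒲) π)) /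
            ENNReal.ofReal (((F N).card : ℝ) ^ α) :=
        eventually_atTop.2 ⟨N, fun m hm => by rw [hN m hm]⟩
      rw [limsup_congr hev, limsup_const]
    have hindep : ∀ (Lr α : ℝ),
        (ENNReal.ofReal Lr / ENNReal.ofReal (((F N).card : ℝ) ^ α) = 0) ↔
          ENNReal.ofReal Lr = 0 := by
      intro Lr α
      rw [ENNReal.div_eq_zero_iff]
      simp [ENNReal.ofReal_ne_top]
    have hDL0 : ∀ 𝒲 : Set (Set X), DL F 𝒲 π = 0 := by
      intro 𝒲
      unfold DL
      refine my_sInf_zero _ fun α β => ?_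
      rw [hvalL 𝒲 α, hvalL 𝒲 β, hindep, hindep]
    have hDU0 : ∀ 𝒲 : Set (Set X), DU F 𝒲 π = 0 := by
      intro 𝒲
      unfold DU
      refine my_sInf_zero _ fun α β => ?_
      rw [hvalU 𝒲 α, hvalU 𝒲 β, hindep, hindep]
    rw [hDL0 𝒰, hDL0 𝒱, hDL0 (covJoin 𝒰 𝒱), hDU0 𝒰, hDU0 𝒱]
    norm_num
end

section
/- Let π : (X,G) → (Y,G) be a factor map and U a finite open cover of X. If the set P(G,U|π) of subsets S ⊆ G with |S∩F_n| → ∞ along which U has positive relative upper entropy (i.e. limsup_n (1/|F_n∩S|) log N(⋁_{g∈F_n∩S} g^{-1}U | π) > 0) is nonempty, then the supremum of the upper dimensions D̄(S) over S ∈ P(G,U|π) equals 1. -/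
open Filter Topology Pointwise
open scoped ENNReal

section AuxCover

lemma aux_mem_interF {G : Type*} {A : Finset G} {S : Set G} {g : G} :
    g ∈ interF A S ↔ g ∈ A ∧ g ∈ S := by
  exact @Finset.mem_filter G (fun g => g ∈ S) (Classical.decPred _) A g

lemma aux_interF_subset {G : Type*} (A : Finset G) (S : Set G) : interF A S ⊆ A :=
  @Finset.filter_subset G (fun g => g ∈ S) (Classical.decPred _) A

lemma aux_interF_mono {G : Type*} (A : Finset G) {S T : Set G} (h : S ⊆ T) :
    interF A S ⊆ interF A T := fun g hg => by
  rw [aux_mem_interF] at *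
  exact ⟨hg.1, h hg.2⟩

lemma aux_exists_subcover {G X : Type*} [Group G] [TopologicalSpace X] [CompactSpace X]
    [MulAction G X] (hcX : ∀ g : G, Continuous fun x : X => g • x)
    {𝒰 : Set (Set X)} (h𝒰 : IsOpenCover 𝒰) (B : Finset G) :
    ∃ t : Finset (Set X), ↑t ⊆ dynJoin B 𝒰 ∧ (Set.univ : Set X) ⊆ ⋃₀ ↑t := by
  classical
  have hopen : ∀ W ∈ dynJoin B 𝒰, IsOpen W := by
    rintro W ⟨f, hf, rfl⟩
    exact isOpen_biInter_finset fun g hg => (h𝒰.2.1 _ (hf g hg)).preimage (hcX g)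
  have hcov : (Set.univ : Set X) ⊆ ⋃ W : dynJoin B 𝒰, (W : Set X) := by
    intro x _
    have hex : ∀ g : G, ∃ U, U ∈ 𝒰 ∧ g • x ∈ U := by
      intro g
      have : g • x ∈ ⋃₀ 𝒰 := h𝒰.2.2.symm ▸ Set.mem_univ _
      simpa [Set.mem_sUnion] using this
    choose f hf1 hf2 using hex
    refine Set.mem_iUnion.mpr ⟨⟨⋂ g ∈ B, (fun x => g • x) ⁻¹' f g, f, fun g _ => hf1 g, rfl⟩, ?_⟩
    simp only [Set.mem_iInter, Set.mem_preimage]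
    exact fun g _ => hf2 g
  obtain ⟨t, ht⟩ := isCompact_univ.elim_finite_subcover
    (fun W : dynJoin B 𝒰 => (W : Set X)) (fun W => hopen _ W.2) hcov
  refine ⟨t.image Subtype.val, ?_, ?_⟩
  · intro W hW
    simp only [Finset.coe_image, Set.mem_image, Finset.mem_coe] at hW
    obtain ⟨V, _, rfl⟩ := hW
    exact V.2
  · intro x hx
    obtain ⟨W, hW1, hW2⟩ := Set.mem_iUnion₂.mp (ht hx)
    refine Set.mem_sUnion.mpr ⟨(W : Set X), ?_, hW2⟩
    simp only [Finset.coe_image, Set.mem_image, Finset.mem_coe]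
    exact ⟨W, hW1, rfl⟩

lemma aux_coverNum_le {X : Type*} {𝒱 : Set (Set X)} {E : Set X} {t : Finset (Set X)}
    (h1 : ↑t ⊆ 𝒱) (h2 : E ⊆ ⋃₀ (t : Set (Set X))) : coverNum 𝒱 E ≤ t.card :=
  Nat.sInf_le ⟨t, h1, rfl, h2⟩

lemma aux_coverNum_mono {X : Type*} {𝒱 𝒲 : Set (Set X)} {E : Set X}
    (href : ∀ W ∈ 𝒱, ∃ W' ∈ 𝒲, W ⊆ W')
    (hne : ∃ t : Finset (Set X), ↑t ⊆ 𝒱 ∧ E ⊆ ⋃₀ (t : Set (Set X))) :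
    coverNum 𝒲 E ≤ coverNum 𝒱 E := by
  classical
  have hset : {k | ∃ t : Finset (Set X), ↑t ⊆ 𝒱 ∧ t.card = k ∧
      E ⊆ ⋃₀ (t : Set (Set X))}.Nonempty := by
    obtain ⟨t, h1, h2⟩ := hne
    exact ⟨t.card, t, h1, rfl, h2⟩
  obtain ⟨t, ht1, ht2, ht3⟩ := Nat.sInf_mem hset
  set c : Set X → Set X := fun W => if h : ∃ W' ∈ 𝒲, W ⊆ W' then h.choose else ∅ with hc
  have hcW : ∀ W ∈ 𝒱, c W ∈ 𝒲 ∧ W ⊆ c W := by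
    intro W hW
    have h := href W hW
    rw [hc]
    simp only [dif_pos h]
    exact ⟨h.choose_spec.1, h.choose_spec.2⟩
  have h1 : ↑(t.image c) ⊆ 𝒲 := by
    intro W hW
    simp only [Finset.coe_image, Set.mem_image, Finset.mem_coe] at hW
    obtain ⟨V, hV, rfl⟩ := hW
    exact (hcW V (ht1 hV)).1
  have h2 : E ⊆ ⋃₀ ((t.image c : Finset (Set X)) : Set (Set X)) := by
    intro x hx
    obtain ⟨V, hV, hxV⟩ := ht3 hx
    exact ⟨c V, by simpa using ⟨V, hV, rfl⟩, (hcW V (ht1 hV)).2 hxV⟩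
  calc coverNum 𝒲 E ≤ (t.image c).card := aux_coverNum_le h1 h2
    _ ≤ t.card := Finset.card_image_le
    _ = coverNum 𝒱 E := ht2

lemma aux_NRel_mono {G X Y : Type*} [Group G] [TopologicalSpace X] [CompactSpace X]
    [MulAction G X] (hcX : ∀ g : G, Continuous fun x : X => g • x)
    {𝒰 : Set (Set X)} (h𝒰 : IsOpenCover 𝒰) (π : X → Y)
    {B B' : Finset G} (hBB : B ⊆ B') :
    NRel (dynJoin B 𝒰) π ≤ NRel (dynJoin B' 𝒰) π := by
  have href : ∀ W ∈ dynJoin B' 𝒰, ∃ W' ∈ dynJoin B 𝒰, W ⊆ W' := by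
    rintro W ⟨f, hf, rfl⟩
    refine ⟨⋂ g ∈ B, (fun x => g • x) ⁻¹' f g, ⟨f, fun g hg => hf g (hBB hg), rfl⟩, ?_⟩
    intro x hx
    simp only [Set.mem_iInter] at hx ⊢
    exact fun g hg => hx g (hBB hg)
  obtain ⟨t, ht1, ht2⟩ := aux_exists_subcover hcX h𝒰 B'
  have hbdd : BddAbove (Set.range fun y : Y => coverNum (dynJoin B' 𝒰) (π ⁻¹' {y})) := by
    refine ⟨t.card, ?_⟩
    rintro k ⟨y, rfl⟩
    exact aux_coverNum_le ht1 ((Set.subset_univ _).trans ht2)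
  exact ciSup_mono hbdd fun y =>
    aux_coverNum_mono href ⟨t, ht1, (Set.subset_univ _).trans ht2⟩

lemma aux_log_ofReal_mono {a b : ℕ} (h : a ≤ b) :
    ENNReal.ofReal (Real.log a) ≤ ENNReal.ofReal (Real.log b) := by
  rcases Nat.eq_zero_or_pos a with rfl | ha
  · simp only [Nat.cast_zero, Real.log_zero, ENNReal.ofReal_zero]
    exact zero_le
  · exact ENNReal.ofReal_le_ofReal
      (Real.log_le_log (by exact_mod_cast ha) (by exact_mod_cast h))

end AuxCover

section AuxDim

lemma aux_DbarAt_zero {G : Type*} (F : ℕ → Finset G) (S : Set G)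
    (hc : Filter.Tendsto (fun n => (F n).card) Filter.atTop Filter.atTop)
    {α : ℝ} (hα : 1 < α) : DbarAt F S α = 0 := by
  have hev : ∀ᶠ n in Filter.atTop,
      ((interF (F n) S).card : ℝ≥0∞) / ENNReal.ofReal (((F n).card : ℝ) ^ α)
        ≤ ENNReal.ofReal (((F n).card : ℝ) ^ (1 - α)) := by
    filter_upwards [hc.eventually_ge_atTop 1] with n hn
    have hc1 : (1 : ℝ) ≤ ((F n).card : ℝ) := by exact_mod_cast hn
    have hcpos : (0 : ℝ) < ((F n).card : ℝ) := by linarith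
    have h1 : ((interF (F n) S).card : ℝ≥0∞) ≤ ENNReal.ofReal (((F n).card : ℝ)) := by
      rw [ENNReal.ofReal_natCast]
      exact_mod_cast Finset.card_le_card (aux_interF_subset (F n) S)
    calc ((interF (F n) S).card : ℝ≥0∞) / ENNReal.ofReal (((F n).card : ℝ) ^ α)
        ≤ ENNReal.ofReal (((F n).card : ℝ)) / ENNReal.ofReal (((F n).card : ℝ) ^ α) :=
          ENNReal.div_le_div h1 le_rfl
      _ = ENNReal.ofReal (((F n).card : ℝ) / ((F n).card : ℝ) ^ α) :=
          (ENNReal.ofReal_div_of_pos (Real.rpow_pos_of_pos hcpos α)).symm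
      _ = ENNReal.ofReal (((F n).card : ℝ) ^ (1 - α)) := by
          rw [Real.rpow_sub hcpos, Real.rpow_one]
  have htend : Filter.Tendsto (fun n => ENNReal.ofReal (((F n).card : ℝ) ^ (1 - α)))
      Filter.atTop (nhds 0) := by
    have h1 : Filter.Tendsto (fun n => ((F n).card : ℝ)) Filter.atTop Filter.atTop :=
      tendsto_natCast_atTop_atTop.comp hc
    have h2 : Filter.Tendsto (fun x : ℝ => x ^ (-(α - 1))) Filter.atTop (nhds 0) :=
      tendsto_rpow_neg_atTop (by linarith)
    have h3 : Filter.Tendsto (fun n => ((F n).card : ℝ) ^ (1 - α)) Filter.atTop (nhds 0) := by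
      have := h2.comp h1
      simpa [neg_sub, Function.comp_def] using this
    have := (ENNReal.continuous_ofReal.tendsto 0).comp h3
    simpa [Function.comp_def] using this
  refine le_antisymm ?_ zero_le
  calc Filter.atTop.limsup (fun n =>
        ((interF (F n) S).card : ℝ≥0∞) / ENNReal.ofReal (((F n).card : ℝ) ^ α))
      ≤ Filter.atTop.limsup (fun n => ENNReal.ofReal (((F n).card : ℝ) ^ (1 - α))) :=
        Filter.limsup_le_limsup hev
    _ = 0 := htend.limsup_eq

lemma aux_upperDim_le_one {G : Type*} (F : ℕ → Finset G) (S : Set G)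
    (hc : Filter.Tendsto (fun n => (F n).card) Filter.atTop Filter.atTop) :
    upperDim F S ≤ 1 := by
  refine le_of_forall_pos_le_add fun ε hε => ?_
  refine csInf_le ⟨0, fun x hx => hx.1⟩ ?_
  exact ⟨by linarith, aux_DbarAt_zero F S hc (by linarith)⟩

lemma aux_upperDim_eq_one {G : Type*} (F : ℕ → Finset G) (S : Set G)
    (hc : Filter.Tendsto (fun n => (F n).card) Filter.atTop Filter.atTop)
    (hne : ∀ α : ℝ, 0 ≤ α → α < 1 → DbarAt F S α ≠ 0) :
    upperDim F S = 1 := by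
  refine le_antisymm (aux_upperDim_le_one F S hc) ?_
  refine le_csInf ⟨2, by norm_num, aux_DbarAt_zero F S hc one_lt_two⟩ ?_
  intro b hb
  by_contra h
  push_neg at h
  exact hne b hb.1 h hb.2

end AuxDim

section AuxMain

open Filter

lemma aux_step_ex {G X Y : Type*} [Group G] [DecidableEq G] [MulAction G X]
    (F : ℕ → Finset G) (hFmono : ∀ n, F n ⊆ F (n + 1))
    (𝒰 : Set (Set X)) (π : X → Y) (S : Set G)
    (hI : InI F S)
    (hc : Tendsto (fun n => (F n).card) atTop atTop)
    {a : ℝ≥0∞} (hfreq : ∃ᶠ n in atTop, a < entAlong F S 𝒰 π n)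
    (p : ℕ) (U0 : Finset G) (k : ℕ) :
    ∃ n m : ℕ, ∃ A : Finset G, p < n ∧ n < m ∧
      a < entAlong F S 𝒰 π n ∧
      U0.card ≤ (interF (F n) S).card ∧ 1 ≤ (interF (F n) S).card ∧
      A ⊆ F m \ F n ∧
      ((F m).card : ℝ) ^ (1 - 1/(k+1 : ℝ)) ≤ (A.card : ℝ) ∧
      (1:ℝ) ≤ ((F m).card : ℝ) := by
  classical
  have hFle : Monotone F := monotone_nat_of_le_succ fun n => hFmono n
  have hev : ∀ᶠ n in atTop, U0.card ≤ (interF (F n) S).card ∧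
      (1 ≤ (interF (F n) S).card ∧ p < n) :=
    (hI.eventually_ge_atTop U0.card).and
      ((hI.eventually_ge_atTop 1).and (eventually_gt_atTop p))
  obtain ⟨n, hn1, hn2, hn3, hn4⟩ := (hfreq.and_eventually hev).exists
  obtain ⟨m, hm1, hm2⟩ := ((hc.eventually_ge_atTop (2 ^ (k+1) + 2 * (F n).card)).and
    (eventually_gt_atTop n)).exists
  have hFnm : F n ⊆ F m := hFle hm2.le
  set cm : ℝ := ((F m).card : ℝ) with hcmdef
  have hk1 : (0:ℝ) < (k:ℝ) + 1 := by positivity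
  have h2k : ((2:ℝ)) ^ (k+1 : ℕ) ≤ cm := by
    have h : (2 ^ (k+1) : ℕ) ≤ (F m).card := le_trans (Nat.le_add_right _ _) hm1
    rw [hcmdef]
    exact_mod_cast h
  have hcm2 : (2:ℝ) ≤ cm := by
    have : (2:ℝ) ≤ (2:ℝ) ^ (k+1 : ℕ) := by
      calc (2:ℝ) = 2 ^ 1 := (pow_one 2).symm
        _ ≤ 2 ^ (k+1 : ℕ) := pow_le_pow_right₀ one_le_two (by omega)
    linarith
  have hcmpos : (0:ℝ) < cm := by linarith
  have hroot : (2:ℝ) ≤ cm ^ (1/((k:ℝ)+1)) := by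
    have h1 : (((2:ℝ) ^ (k+1 : ℕ)) : ℝ) ^ (1/((k:ℝ)+1)) ≤ cm ^ (1/((k:ℝ)+1)) :=
      Real.rpow_le_rpow (by positivity) h2k (by positivity)
    have h2 : (((2:ℝ) ^ (k+1 : ℕ)) : ℝ) ^ (1/((k:ℝ)+1)) = 2 := by
      rw [← Real.rpow_natCast 2 (k+1), ← Real.rpow_mul (by norm_num)]
      push_cast
      rw [mul_one_div, div_self (ne_of_gt hk1), Real.rpow_one]
    linarith
  set x : ℝ := cm ^ (1 - 1/((k:ℝ)+1)) with hxdef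
  have hxle : x ≤ cm / 2 := by
    rw [hxdef, Real.rpow_sub hcmpos, Real.rpow_one]
    exact div_le_div_of_nonneg_left (by linarith) (by norm_num) hroot
  have hsd : ((F n).card : ℝ) ≤ cm / 2 - 1 := by
    have hp2 : 2 ≤ 2^(k+1) := by
      calc (2:ℕ) = 2^1 := rfl
        _ ≤ 2^(k+1) := Nat.pow_le_pow_right (by norm_num) (by omega)
    have h : (2 * (F n).card + 2 : ℕ) ≤ (F m).card := le_trans (by omega) hm1
    have h' : ((2 * (F n).card + 2 : ℕ) : ℝ) ≤ cm := by
      rw [hcmdef]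
      exact_mod_cast h
    push_cast at h'
    linarith
  have hceil : ⌈x⌉₊ ≤ (F m \ F n).card := by
    rw [Nat.ceil_le]
    have hcs : (((F m \ F n).card : ℕ) : ℝ) = cm - ((F n).card : ℝ) := by
      rw [Finset.card_sdiff_of_subset hFnm]
      push_cast [Nat.cast_sub (Finset.card_le_card hFnm)]
      ring
    rw [hcs]
    linarith
  obtain ⟨A, hA1, hA2⟩ := Finset.exists_subset_card_eq hceil
  have hxpos : (1:ℝ) ≤ cm := by linarith
  refine ⟨n, m, A, hn4, hm2, hn1, hn2, hn3, hA1, ?_, hxpos⟩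
  rw [hA2]
  have hconv : ((k:ℝ)+1) = ((k:ℕ)+1 : ℝ) := by push_cast; ring
  calc ((F m).card : ℝ) ^ (1 - 1/(k+1 : ℝ)) = x := by rw [hxdef]
    _ ≤ (⌈x⌉₊ : ℝ) := Nat.le_ceil x

lemma aux_exists_good {G X Y : Type*} [Group G] [DecidableEq G] [TopologicalSpace X] [CompactSpace X]
    [MulAction G X] (hcX : ∀ g : G, Continuous fun x : X => g • x)
    (π : X → Y) (F : ℕ → Finset G) (hFmono : ∀ n, F n ⊆ F (n + 1))
    (𝒰 : Set (Set X)) (h𝒰 : IsOpenCover 𝒰)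
    {S : Set G} (hS : InP F S 𝒰 π) :
    ∃ S' : Set G, InP F S' 𝒰 π ∧ upperDim F S' = 1 := by
  classical
  have hFle : Monotone F := monotone_nat_of_le_succ fun n => hFmono n
  have hI := hS.1
  have hc : Tendsto (fun n => (F n).card) atTop atTop :=
    tendsto_atTop_mono (fun n => Finset.card_le_card (aux_interF_subset (F n) S)) hI
  obtain ⟨a, ha0, hat, haL⟩ : ∃ a : ℝ≥0∞, 0 < a ∧ a ≠ ⊤ ∧
      a < atTop.limsup (entAlong F S 𝒰 π) := by
    rcases eq_or_ne (atTop.limsup (entAlong F S 𝒰 π)) ⊤ with h | h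
    · exact ⟨1, one_pos, ENNReal.one_ne_top, h ▸ ENNReal.one_lt_top⟩
    · exact ⟨atTop.limsup (entAlong F S 𝒰 π) / 2,
        ENNReal.div_pos (ne_of_gt hS.2) ENNReal.ofNat_ne_top,
        (ENNReal.div_lt_top h (by norm_num)).ne,
        ENNReal.half_lt_self (ne_of_gt hS.2) h⟩
  have hfreq : ∃ᶠ n in atTop, a < entAlong F S 𝒰 π n :=
    Filter.frequently_lt_of_lt_limsup (by isBoundedDefault) haL
  choose nf mf Af hg1 hg2 hg3 hg4 hg5 hg6 hg7 hg8 using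
    aux_step_ex F hFmono 𝒰 π S hI hc hfreq
  let st : ℕ → ℕ × ℕ × Finset G × Finset G := fun k => Nat.rec
    (nf 0 ∅ 0, mf 0 ∅ 0, Af 0 ∅ 0, Af 0 ∅ 0)
    (fun k ih => (nf ih.2.1 ih.2.2.2 (k+1), mf ih.2.1 ih.2.2.2 (k+1),
      Af ih.2.1 ih.2.2.2 (k+1), ih.2.2.2 ∪ Af ih.2.1 ih.2.2.2 (k+1))) k
  let N : ℕ → ℕ := fun k => (st k).1
  let M : ℕ → ℕ := fun k => (st k).2.1
  let A : ℕ → Finset G := fun k => (st k).2.2.1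
  let U : ℕ → Finset G := fun k => (st k).2.2.2
  let PM : ℕ → ℕ := fun k => Nat.casesOn k 0 fun j => M j
  let PU : ℕ → Finset G := fun k => Nat.casesOn k ∅ fun j => U j
  have hspec : ∀ k, PM k < N k ∧ N k < M k ∧ a < entAlong F S 𝒰 π (N k) ∧
      (PU k).card ≤ (interF (F (N k)) S).card ∧ 1 ≤ (interF (F (N k)) S).card ∧
      A k ⊆ F (M k) \ F (N k) ∧
      ((F (M k)).card : ℝ) ^ (1 - 1/(k+1 : ℝ)) ≤ ((A k).card : ℝ) ∧
      (1:ℝ) ≤ ((F (M k)).card : ℝ) ∧ U k = PU k ∪ A k := by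
    intro k
    cases k with
    | zero =>
      exact ⟨hg1 0 ∅ 0, hg2 0 ∅ 0, hg3 0 ∅ 0, hg4 0 ∅ 0, hg5 0 ∅ 0, hg6 0 ∅ 0,
        hg7 0 ∅ 0, hg8 0 ∅ 0, (Finset.empty_union _).symm⟩
    | succ j =>
      exact ⟨hg1 (M j) (U j) (j+1), hg2 (M j) (U j) (j+1), hg3 (M j) (U j) (j+1),
        hg4 (M j) (U j) (j+1), hg5 (M j) (U j) (j+1), hg6 (M j) (U j) (j+1),
        hg7 (M j) (U j) (j+1), hg8 (M j) (U j) (j+1), rfl⟩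
  have hNmono : StrictMono N := strictMono_nat_of_lt_succ fun k =>
    lt_trans (hspec k).2.1 (hspec (k+1)).1
  have hAU : ∀ j k, j ≤ k → A j ⊆ U k := by
    intro j k hjk
    induction k with
    | zero =>
      have hj0 : j = 0 := Nat.le_zero.mp hjk
      subst hj0
      rw [(hspec 0).2.2.2.2.2.2.2.2]
      exact Finset.subset_union_right
    | succ i ih =>
      have hU : U (i+1) = PU (i+1) ∪ A (i+1) := (hspec (i+1)).2.2.2.2.2.2.2.2
      by_cases hj : j = i + 1
      · subst hj
        rw [hU]
        exact Finset.subset_union_right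
      · have hji : j ≤ i := by omega
        rw [hU]
        exact (ih hji).trans Finset.subset_union_left
  have hNk : ∀ k, k ≤ N k := fun k => hNmono.le_apply
  have hMk : ∀ k, k ≤ M k := fun k => le_trans (hNk k) (le_of_lt (hspec k).2.1)
  set S' : Set G := S ∪ ⋃ j, ((A j : Finset G) : Set G) with hS'def
  have hSS' : S ⊆ S' := Set.subset_union_left
  have hI' : InI F S' :=
    tendsto_atTop_mono (fun n => Finset.card_le_card (aux_interF_mono _ hSS')) hI
  have hbound : ∀ k, (interF (F (N k)) S').card ≤ 2 * (interF (F (N k)) S).card := by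
    intro k
    have hsub : interF (F (N k)) S' ⊆ interF (F (N k)) S ∪ PU k := by
      intro g hg
      rw [aux_mem_interF] at hg
      rcases hg.2 with hgS | hgA
      · exact Finset.mem_union_left _ (aux_mem_interF.mpr ⟨hg.1, hgS⟩)
      · obtain ⟨j, hj⟩ : ∃ j, g ∈ A j := by
          simpa [Set.mem_iUnion] using hgA
        have hjk : j < k := by
          by_contra hcon
          push_neg at hcon
          have h1 : g ∈ F (N j) := hFle (hNmono.monotone hcon) hg.1
          exact (Finset.mem_sdiff.mp ((hspec j).2.2.2.2.2.1 hj)).2 h1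
        cases k with
        | zero => omega
        | succ i => exact Finset.mem_union_right _ (hAU j i (by omega) hj)
    calc (interF (F (N k)) S').card ≤ (interF (F (N k)) S ∪ PU k).card :=
          Finset.card_le_card hsub
      _ ≤ (interF (F (N k)) S).card + (PU k).card := Finset.card_union_le _ _
      _ ≤ 2 * (interF (F (N k)) S).card := by
          have := (hspec k).2.2.2.1
          omega
  have hent : ∀ k, a / 2 ≤ entAlong F S' 𝒰 π (N k) := by
    intro k
    set n := N k with hndef
    set d : ℝ≥0∞ := ((interF (F n) S).card : ℝ≥0∞) with hddef
    have hcard1 : 1 ≤ (interF (F n) S).card := (hspec k).2.2.2.2.1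
    have hd0 : d ≠ 0 := by
      rw [hddef]
      exact_mod_cast Nat.one_le_iff_ne_zero.mp hcard1
    have hdt : d ≠ ⊤ := ENNReal.natCast_ne_top _
    have hnum : ENNReal.ofReal (Real.log (NRel (dynJoin (interF (F n) S) 𝒰) π)) ≤
        ENNReal.ofReal (Real.log (NRel (dynJoin (interF (F n) S') 𝒰) π)) :=
      aux_log_ofReal_mono (aux_NRel_mono hcX h𝒰 π (aux_interF_mono _ hSS'))
    have hae : a * d ≤
        ENNReal.ofReal (Real.log (NRel (dynJoin (interF (F n) S) 𝒰) π)) := by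
      have h3 := (hspec k).2.2.1
      simp only [entAlong] at h3
      exact (ENNReal.le_div_iff_mul_le (Or.inl hd0) (Or.inl hdt)).mp h3.le
    have hd' : ((interF (F n) S').card : ℝ≥0∞) ≤ 2 * d := by
      have hb := hbound k
      calc ((interF (F n) S').card : ℝ≥0∞)
          ≤ ((2 * (interF (F n) S).card : ℕ) : ℝ≥0∞) := by exact_mod_cast hb
        _ = 2 * d := by rw [hddef]; push_cast; ring
    calc a / 2 = a * d / (2 * d) := (ENNReal.mul_div_mul_right a 2 hd0 hdt).symm
      _ ≤ ENNReal.ofReal (Real.log (NRel (dynJoin (interF (F n) S') 𝒰) π)) /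
          ((interF (F n) S').card : ℝ≥0∞) :=
            ENNReal.div_le_div (le_trans hae hnum) hd'
      _ = entAlong F S' 𝒰 π n := rfl
  have hfreq' : ∃ᶠ n in atTop, a / 2 ≤ entAlong F S' 𝒰 π n := by
    rw [Filter.frequently_atTop]
    intro b
    exact ⟨N b, hNk b, hent b⟩
  have hP' : InP F S' 𝒰 π :=
    ⟨hI', lt_of_lt_of_le (ENNReal.div_pos (ne_of_gt ha0) ENNReal.ofNat_ne_top)
      (Filter.le_limsup_of_frequently_le hfreq')⟩
  have hne : ∀ α : ℝ, 0 ≤ α → α < 1 → DbarAt F S' α ≠ 0 := by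
    intro α hα0 hα1
    obtain ⟨K, hK⟩ := exists_nat_one_div_lt (show (0:ℝ) < 1 - α by linarith)
    have hterm : ∀ k, K ≤ k → (1:ℝ≥0∞) ≤
        ((interF (F (M k)) S').card : ℝ≥0∞) /
          ENNReal.ofReal (((F (M k)).card : ℝ) ^ α) := by
      intro k hKk
      have h8 : (1:ℝ) ≤ ((F (M k)).card : ℝ) := (hspec k).2.2.2.2.2.2.2.1
      have hαβ : α ≤ 1 - 1/((k:ℝ)+1) := by
        have h9 : 1/((k:ℝ)+1) ≤ 1/((K:ℝ)+1) := by
          apply one_div_le_one_div_of_le (by positivity)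
          have : (K:ℝ) ≤ (k:ℝ) := by exact_mod_cast hKk
          linarith
        linarith
      have h1 : ((F (M k)).card : ℝ) ^ α ≤ ((F (M k)).card : ℝ) ^ (1 - 1/((k:ℝ)+1)) :=
        Real.rpow_le_rpow_of_exponent_le h8 hαβ
      have h2 : ((F (M k)).card : ℝ) ^ (1 - 1/(k+1:ℝ)) ≤ ((A k).card : ℝ) :=
        (hspec k).2.2.2.2.2.2.1
      have hAsub : A k ⊆ interF (F (M k)) S' := by
        intro g hg
        have h6 := (hspec k).2.2.2.2.2.1 hg
        rw [aux_mem_interF]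
        refine ⟨(Finset.mem_sdiff.mp h6).1, Or.inr (Set.mem_iUnion.mpr ⟨k, hg⟩)⟩
      have h3 : ((A k).card : ℝ) ≤ ((interF (F (M k)) S').card : ℝ) := by
        exact_mod_cast Finset.card_le_card hAsub
      have hden0 : ENNReal.ofReal (((F (M k)).card : ℝ) ^ α) ≠ 0 :=
        (ENNReal.ofReal_pos.mpr (Real.rpow_pos_of_pos (by linarith) α)).ne'
      rw [ENNReal.le_div_iff_mul_le (Or.inl hden0) (Or.inl ENNReal.ofReal_ne_top), one_mul]
      calc ENNReal.ofReal (((F (M k)).card : ℝ) ^ α)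
          ≤ ENNReal.ofReal (((interF (F (M k)) S').card : ℝ)) :=
            ENNReal.ofReal_le_ofReal (by linarith)
        _ = ((interF (F (M k)) S').card : ℝ≥0∞) := ENNReal.ofReal_natCast _
    have hfr : ∃ᶠ n in atTop, (1:ℝ≥0∞) ≤
        ((interF (F n) S').card : ℝ≥0∞) / ENNReal.ofReal (((F n).card : ℝ) ^ α) := by
      rw [Filter.frequently_atTop]
      intro b
      exact ⟨M (max b K), le_trans (le_max_left b K) (hMk _),
        hterm _ (le_max_right b K)⟩
    have h1D : (1:ℝ≥0∞) ≤ DbarAt F S' α := Filter.le_limsup_of_frequently_le hfr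
    intro h0
    rw [h0] at h1D
    simp at h1D
  exact ⟨S', hP', aux_upperDim_eq_one F S' hc hne⟩

end AuxMain

theorem stmt9 {G X Y : Type*} [Group G] [Countable G]
    [MetricSpace X] [CompactSpace X] [MetricSpace Y] [CompactSpace Y]
    [MulAction G X] [MulAction G Y]
    (hcX : ∀ g : G, Continuous fun x : X => g • x)
    (hcY : ∀ g : G, Continuous fun y : Y => g • y)
    (π : X → Y) (hπ : IsFactorMap G π)
    (F : ℕ → Finset G) (hF : IsFolnerSeq G F) (hFmono : ∀ n, F n ⊆ F (n + 1))
    (𝒰 : Set (Set X)) (h𝒰 : IsOpenCover 𝒰)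
    (hP : ∃ S : Set G, InP F S 𝒰 π) :
    sSup {d : ℝ | ∃ S : Set G, InP F S 𝒰 π ∧ d = upperDim F S} = 1 := by
  classical
  obtain ⟨S, hSP⟩ := hP
  obtain ⟨S', hP', hdim⟩ := aux_exists_good hcX π F hFmono 𝒰 h𝒰 hSP
  have h1mem : (1:ℝ) ∈ {d : ℝ | ∃ S : Set G, InP F S 𝒰 π ∧ d = upperDim F S} :=
    ⟨S', hP', hdim.symm⟩
  have hub : ∀ d ∈ {d : ℝ | ∃ S : Set G, InP F S 𝒰 π ∧ d = upperDim F S}, d ≤ 1 := by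
    rintro d ⟨T, hT, rfl⟩
    exact aux_upperDim_le_one F T
      (Filter.tendsto_atTop_mono
        (fun n => Finset.card_le_card (aux_interF_subset (F n) T)) hT.1)
  exact le_antisymm (csSup_le ⟨1, h1mem⟩ hub) (le_csSup ⟨1, hub⟩ h1mem)
end
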